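/- arXiv:2006.02070 — 5 statements merged into one kernel-verified Lean document; each statement's English description precedes it below -/
import Mathlib

section
/- There exists a constant K > 0 such that for every positive integer M and all x, y ∈ [-π, π] with xy ≠ 0 and x ≠ y, |⅟(x-y) · Σ_{k=1}^{M} (e^{ikx} - e^{iky})/k| ≤ K/√(|xy|). -/
open scoped Real
open Complex Finset

lemma exp_I_mul_ofReal (t : ℝ) :
    Complex.exp (Complex.I * (t:ℂ)) = (Real.cos t : ℂ) + (Real.sin t : ℂ) * Complex.I := by
  rw [mul_comm, Complex.exp_mul_I, Complex.ofReal_cos, Complex.ofReal_sin]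

lemma exp_sub_one_lower {t : ℝ} (ht : |t| ≤ π) :
    2 * |t| / π ≤ ‖(Complex.exp (Complex.I * t) - 1)‖ := by
  have hpi := Real.pi_pos
  have hsq : (‖(Complex.exp (Complex.I * t) - 1)‖)^2 = 2 - 2 * Real.cos t := by
    rw [exp_I_mul_ofReal, Complex.sq_norm, Complex.normSq_apply]
    have hre : ((Real.cos t : ℂ) + (Real.sin t : ℂ) * Complex.I - 1).re = Real.cos t - 1 := by
      simp [Complex.cos_ofReal_re, Complex.sin_ofReal_re]
    have him : ((Real.cos t : ℂ) + (Real.sin t : ℂ) * Complex.I - 1).im = Real.sin t := by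
      simp [Complex.cos_ofReal_re, Complex.sin_ofReal_re]
    rw [hre, him]
    nlinarith [Real.sin_sq_add_cos_sq t]
  have hcos : Real.cos t ≤ 1 - 2 / π ^ 2 * t ^ 2 := Real.cos_le_one_sub_mul_cos_sq ht
  have habs : (0:ℝ) ≤ ‖(Complex.exp (Complex.I * t) - 1)‖ := norm_nonneg _
  have h4 : 2 / π^2 * t^2 * π^2 = 2 * t^2 := by field_simp
  have h3 : (2 * |t| / π)^2 ≤ (‖(Complex.exp (Complex.I * t) - 1)‖)^2 := by
    rw [hsq, div_pow, mul_pow, _root_.sq_abs, div_le_iff₀ (by positivity)]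
    nlinarith [sq_nonneg π, sq_nonneg t]
  nlinarith [_root_.sq_abs t, abs_nonneg t, div_nonneg (mul_nonneg (by norm_num : (0:ℝ) ≤ 2) (abs_nonneg t)) hpi.le]

lemma exp_ne_one {t : ℝ} (ht : |t| ≤ π) (ht0 : t ≠ 0) : Complex.exp (Complex.I * t) ≠ 1 := by
  intro h
  have h1 := exp_sub_one_lower ht
  rw [h, sub_self, norm_zero] at h1
  have : 0 < 2 * |t| / π := by positivity
  linarith

lemma abs_exp_I_mul (t : ℝ) : ‖(Complex.exp (Complex.I * t))‖ = 1 := by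
  rw [mul_comm]; exact Complex.norm_exp_ofReal_mul_I t

lemma dirichlet_bound {t : ℝ} (ht : |t| ≤ π) (ht0 : t ≠ 0) (N M : ℕ) :
    ‖(∑ k ∈ Finset.Ioc N M, Complex.exp (Complex.I * k * t))‖ ≤ π / |t| := by
  have hpi := Real.pi_pos
  have ht' : 0 < |t| := abs_pos.mpr ht0
  have hnn : (0:ℝ) ≤ π / |t| := by positivity
  rcases le_or_gt M N with h | h
  · rw [Finset.Ioc_eq_empty (by omega), Finset.sum_empty, norm_zero]; exact hnn
  set z := Complex.exp (Complex.I * t) with hz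
  have hzk : ∀ k : ℕ, Complex.exp (Complex.I * k * t) = z ^ k := by
    intro k
    rw [hz, ← Complex.exp_nat_mul]
    ring_nf
  have hsum : ∑ k ∈ Finset.Ioc N M, Complex.exp (Complex.I * k * t)
      = (z ^ (M+1) - z ^ (N+1)) / (z - 1) := by
    rw [Finset.sum_congr rfl (fun k _ => hzk k), ← Finset.Ico_add_one_add_one_eq_Ioc,
      geom_sum_Ico (exp_ne_one ht ht0) (by omega)]
  rw [hsum, norm_div]
  have hz1 : ‖z‖ = 1 := abs_exp_I_mul t
  have hnum : ‖(z ^ (M+1) - z ^ (N+1))‖ ≤ 2 := by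
    calc ‖(z ^ (M+1) - z ^ (N+1))‖
        ≤ ‖(z ^ (M+1))‖ + ‖(z ^ (N+1))‖ := by
          exact (norm_sub_le _ _)
      _ = 2 := by rw [norm_pow, norm_pow, hz1]; norm_num
  have hden : 2 * |t| / π ≤ ‖(z - 1)‖ := exp_sub_one_lower ht
  have hdenpos : 0 < ‖(z - 1)‖ := lt_of_lt_of_le (by positivity) hden
  rw [div_le_div_iff₀ hdenpos (by positivity)]
  calc ‖(z ^ (M+1) - z ^ (N+1))‖ * |t| ≤ 2 * |t| := by
        apply mul_le_mul_of_nonneg_right hnum (abs_nonneg t)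
    _ = (2 * |t| / π) * π := by field_simp
    _ ≤ ‖(z - 1)‖ * π := by
        apply mul_le_mul_of_nonneg_right hden hpi.le
    _ = π * ‖(z - 1)‖ := by ring

lemma abel_tail {B : ℝ} (hB : 0 ≤ B) (z : ℕ → ℂ) (N : ℕ)
    (hG : ∀ M, ‖(∑ k ∈ Finset.Ioc N M, z k)‖ ≤ B) (M : ℕ) :
    ‖(∑ k ∈ Finset.Ioc N M, z k / k)‖ ≤ B / (N + 1) := by
  have hN1 : (0:ℝ) < (N:ℝ) + 1 := by positivity
  rcases le_or_gt M N with h | h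
  · rw [Finset.Ioc_eq_empty (by omega), Finset.sum_empty, norm_zero]
    positivity
  -- key induction
  have key : ∀ m : ℕ, N + 1 ≤ m →
      ‖((∑ k ∈ Finset.Ioc N m, z k / k) - (∑ k ∈ Finset.Ioc N m, z k) / (m:ℂ))‖
        ≤ B * (1 / ((N:ℝ)+1) - 1 / (m:ℝ)) := by
    intro m hm
    induction m, hm using Nat.le_induction with
    | base =>
      rw [Nat.Ioc_succ_singleton, Finset.sum_singleton, Finset.sum_singleton]
      push_cast
      rw [sub_self, norm_zero]
      simp
    | succ m hm ih =>
      have hmpos : (0:ℝ) < (m:ℝ) := by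
        have : 1 ≤ m := by omega
        exact_mod_cast Nat.lt_of_lt_of_le Nat.zero_lt_one this
      have hmC : ((m:ℂ)) ≠ 0 := by exact_mod_cast hmpos.ne'
      have hm1C : ((m:ℂ) + 1) ≠ 0 := by
        have : (0:ℝ) < (m:ℝ) + 1 := by linarith
        exact_mod_cast this.ne'
      have hsplit : ∀ f : ℕ → ℂ, ∑ k ∈ Finset.Ioc N (m+1), f k
          = (∑ k ∈ Finset.Ioc N m, f k) + f (m+1) := fun f =>
        Finset.sum_Ioc_succ_top (by omega) f
      have hGm := hG m
      have hid : (∑ k ∈ Finset.Ioc N (m+1), z k / k) - (∑ k ∈ Finset.Ioc N (m+1), z k) / ((m:ℕ)+1 : ℂ)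
          = ((∑ k ∈ Finset.Ioc N m, z k / k) - (∑ k ∈ Finset.Ioc N m, z k) / (m:ℂ))
            + (∑ k ∈ Finset.Ioc N m, z k) * (1/(m:ℂ) - 1/((m:ℂ)+1)) := by
        rw [hsplit (fun k => z k / k), hsplit z]
        push_cast
        field_simp
        ring
      have := hsplit z
      calc ‖((∑ k ∈ Finset.Ioc N (m+1), z k / k)
              - (∑ k ∈ Finset.Ioc N (m+1), z k) / ((m+1 : ℕ) : ℂ))‖
          = ‖(((∑ k ∈ Finset.Ioc N m, z k / k) - (∑ k ∈ Finset.Ioc N m, z k) / (m:ℂ))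
            + (∑ k ∈ Finset.Ioc N m, z k) * (1/(m:ℂ) - 1/((m:ℂ)+1)))‖ := by
            rw [← hid]; push_cast; ring_nf
        _ ≤ ‖((∑ k ∈ Finset.Ioc N m, z k / k) - (∑ k ∈ Finset.Ioc N m, z k) / (m:ℂ))‖
            + ‖((∑ k ∈ Finset.Ioc N m, z k) * (1/(m:ℂ) - 1/((m:ℂ)+1)))‖ :=
            norm_add_le _ _
        _ ≤ B * (1 / ((N:ℝ)+1) - 1 / (m:ℝ)) + B * (1/(m:ℝ) - 1/((m:ℝ)+1)) := by
            apply add_le_add ih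
            rw [norm_mul]
            have h2 : ‖(1/(m:ℂ) - 1/((m:ℂ)+1))‖ = 1/(m:ℝ) - 1/((m:ℝ)+1) := by
              have hcast : (1/(m:ℂ) - 1/((m:ℂ)+1)) = ((1/(m:ℝ) - 1/((m:ℝ)+1) : ℝ) : ℂ) := by
                push_cast; ring
              have hnn : (0:ℝ) ≤ 1/(m:ℝ) - 1/((m:ℝ)+1) := by
                have : 1/((m:ℝ)+1) ≤ 1/(m:ℝ) := by
                  apply one_div_le_one_div_of_le hmpos; linarith
                linarith
              rw [hcast, Complex.norm_real, Real.norm_eq_abs, _root_.abs_of_nonneg hnn]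
            rw [h2]
            apply mul_le_mul hGm le_rfl _ hB
            have : 1/((m:ℝ)+1) ≤ 1/(m:ℝ) := by
              apply one_div_le_one_div_of_le hmpos; linarith
            linarith
        _ = B * (1 / ((N:ℝ)+1) - 1 / ((m:ℝ)+1)) := by ring
        _ = B * (1 / ((N:ℝ)+1) - 1 / (((m+1 : ℕ)):ℝ)) := by push_cast; ring
  have hMpos : (0:ℝ) < (M:ℝ) := by
    have : 1 ≤ M := by omega
    exact_mod_cast Nat.lt_of_lt_of_le Nat.zero_lt_one this
  have hkey := key M (by omega)
  have htri : ‖(∑ k ∈ Finset.Ioc N M, z k / k)‖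
      ≤ ‖((∑ k ∈ Finset.Ioc N M, z k / k) - (∑ k ∈ Finset.Ioc N M, z k) / (M:ℂ))‖
        + ‖((∑ k ∈ Finset.Ioc N M, z k) / (M:ℂ))‖ := by
    have := norm_add_le ((∑ k ∈ Finset.Ioc N M, z k / k) - (∑ k ∈ Finset.Ioc N M, z k) / (M:ℂ))
      ((∑ k ∈ Finset.Ioc N M, z k) / (M:ℂ))
    simpa using this
  have habs2 : ‖((∑ k ∈ Finset.Ioc N M, z k) / (M:ℂ))‖ ≤ B / (M:ℝ) := by
    rw [norm_div, Complex.norm_natCast]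
    gcongr
    exact hG M
  have hMinv : 1/((N:ℝ)+1) - 1/(M:ℝ) + 1/(M:ℝ) = 1/((N:ℝ)+1) := by ring
  calc ‖(∑ k ∈ Finset.Ioc N M, z k / k)‖
      ≤ B * (1 / ((N:ℝ)+1) - 1 / (M:ℝ)) + B / (M:ℝ) := le_trans htri (add_le_add hkey habs2)
    _ = B / ((N:ℝ)+1) := by field_simp; ring


lemma term_ftc {x y : ℝ} (k : ℕ) (hk : 1 ≤ k) :
    Complex.exp (Complex.I * k * y) / k - Complex.exp (Complex.I * k * x) / k
      = ∫ t in x..y, Complex.I * Complex.exp (Complex.I * k * t) := by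
  have hc : (Complex.I * k) ≠ 0 :=
    mul_ne_zero Complex.I_ne_zero (Nat.cast_ne_zero.mpr (by omega))
  have h1 : ∀ t : ℝ, Complex.I * (k:ℂ) * (t:ℂ) = (Complex.I * k) * (t:ℂ) := fun t => by ring
  calc Complex.exp (Complex.I * k * y) / k - Complex.exp (Complex.I * k * x) / k
      = Complex.I * ((Complex.exp ((Complex.I * k) * y) - Complex.exp ((Complex.I * k) * x)) / (Complex.I * k)) := by
        rw [← h1, ← h1]
        have hkC : (k:ℂ) ≠ 0 := Nat.cast_ne_zero.mpr (by omega)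
        field_simp
    _ = Complex.I * ∫ t in x..y, Complex.exp ((Complex.I * k) * t) := by
        rw [integral_exp_mul_complex hc]
    _ = ∫ t in x..y, Complex.I * Complex.exp (Complex.I * k * t) := by
        rw [← intervalIntegral.integral_const_mul]

lemma cont_integrand (M : ℕ) : Continuous fun t : ℝ =>
    ∑ k ∈ Finset.Icc 1 M, Complex.I * Complex.exp (Complex.I * k * t) := by
  apply continuous_finset_sum
  intro k _
  exact continuous_const.mul (Complex.continuous_exp.comp (continuous_const.mul Complex.continuous_ofReal))

lemma same_sign_bound (M : ℕ) {x y : ℝ} (hx : 0 < x) (hxy : x ≤ y) (hy : y ≤ π) :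
    ‖((∑ k ∈ Finset.Icc 1 M, Complex.exp (Complex.I * k * y) / k)
      - ∑ k ∈ Finset.Icc 1 M, Complex.exp (Complex.I * k * x) / k)‖
      ≤ π * Real.log (y / x) := by
  have hpi := Real.pi_pos
  have hdiff : (∑ k ∈ Finset.Icc 1 M, Complex.exp (Complex.I * k * y) / k)
      - (∑ k ∈ Finset.Icc 1 M, Complex.exp (Complex.I * k * x) / k)
      = ∫ t in x..y, ∑ k ∈ Finset.Icc 1 M, Complex.I * Complex.exp (Complex.I * k * t) := by
    rw [← Finset.sum_sub_distrib]
    rw [intervalIntegral.integral_finset_sum]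
    · exact Finset.sum_congr rfl fun k hk => term_ftc k (Finset.mem_Icc.mp hk).1
    · intro k _
      exact (continuous_const.mul (Complex.continuous_exp.comp
        (continuous_const.mul Complex.continuous_ofReal))).intervalIntegrable x y
  rw [hdiff]
  have hnorm : ∀ t ∈ Set.Icc x y,
      ‖∑ k ∈ Finset.Icc 1 M, Complex.I * Complex.exp (Complex.I * k * t)‖ ≤ π * t⁻¹ := by
    intro t ht
    have htpos : 0 < t := lt_of_lt_of_le hx ht.1
    have habs : |t| ≤ π := by
      rw [abs_of_pos htpos]; exact le_trans ht.2 hy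
    have : (∑ k ∈ Finset.Icc 1 M, Complex.I * Complex.exp (Complex.I * k * t))
        = Complex.I * ∑ k ∈ Finset.Ioc 0 M, Complex.exp (Complex.I * k * t) := by
      rw [Finset.mul_sum, ← Finset.Icc_add_one_left_eq_Ioc, zero_add]
    rw [this]
    rw [norm_mul, Complex.norm_I, one_mul]
    have := dirichlet_bound habs htpos.ne' 0 M
    rw [abs_of_pos htpos] at this
    calc ‖∑ k ∈ Finset.Ioc 0 M, Complex.exp (Complex.I * k * t)‖ ≤ π / t := this
      _ = π * t⁻¹ := by ring
  have h1 : ‖∫ t in x..y, ∑ k ∈ Finset.Icc 1 M, Complex.I * Complex.exp (Complex.I * k * t)‖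
      ≤ ∫ t in x..y, ‖∑ k ∈ Finset.Icc 1 M, Complex.I * Complex.exp (Complex.I * k * t)‖ :=
    intervalIntegral.norm_integral_le_integral_norm hxy
  have hcont : ContinuousOn (fun t : ℝ => π * t⁻¹) (Set.Icc x y) := by
    apply ContinuousOn.mul continuousOn_const
    apply ContinuousOn.inv₀ continuousOn_id
    intro t ht
    exact (lt_of_lt_of_le hx ht.1).ne'
  have h2 : (∫ t in x..y, ‖∑ k ∈ Finset.Icc 1 M, Complex.I * Complex.exp (Complex.I * k * t)‖)
      ≤ ∫ t in x..y, π * t⁻¹ := by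
    apply intervalIntegral.integral_mono_on hxy
    · exact ((cont_integrand M).norm).intervalIntegrable x y
    · exact (hcont.mono (by rw [Set.uIcc_of_le hxy])).intervalIntegrable
    · exact hnorm
  have h3 : (∫ t in x..y, π * t⁻¹) = π * Real.log (y / x) := by
    rw [intervalIntegral.integral_const_mul, integral_inv_of_pos hx (lt_of_lt_of_le hx hxy)]
  calc ‖(∫ t in x..y, ∑ k ∈ Finset.Icc 1 M, Complex.I * Complex.exp (Complex.I * k * t))‖
      = ‖∫ t in x..y, ∑ k ∈ Finset.Icc 1 M, Complex.I * Complex.exp (Complex.I * k * t)‖ := rfl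
    _ ≤ ∫ t in x..y, π * t⁻¹ := le_trans h1 h2
    _ = π * Real.log (y / x) := h3

lemma log_le_bound {x y : ℝ} (hx : 0 < x) (hxy : x ≤ y) :
    Real.log (y / x) ≤ 4 * (y - x) / Real.sqrt (x * y) := by
  have hy : 0 < y := lt_of_lt_of_le hx hxy
  set sx := Real.sqrt x with hsx
  set sy := Real.sqrt y with hsy
  have hsxp : 0 < sx := Real.sqrt_pos.mpr hx
  have hsyp : 0 < sy := Real.sqrt_pos.mpr hy
  have hsx2 : sx ^ 2 = x := Real.sq_sqrt hx.le
  have hsy2 : sy ^ 2 = y := Real.sq_sqrt hy.le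
  have hsxy : Real.sqrt (x * y) = sx * sy := Real.sqrt_mul hx.le y
  have hsxsy : sx ≤ sy := Real.sqrt_le_sqrt hxy
  rw [hsxy]
  rcases le_or_gt y (2 * x) with hc | hc
  · -- y ≤ 2x
    have hlog : Real.log (y / x) ≤ (y - x) / x := by
      have := Real.log_le_sub_one_of_pos (div_pos hy hx)
      calc Real.log (y / x) ≤ y / x - 1 := this
        _ = (y - x) / x := by field_simp
    refine le_trans hlog ?_
    rw [div_le_div_iff₀ hx (by positivity)]
    have hkey : sx * sy ≤ 4 * x := by nlinarith
    nlinarith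
  · -- 2x < y
    have hlog : Real.log (y / x) ≤ 2 * (sy / sx) := by
      have hsqrt : Real.sqrt (y / x) = sy / sx := by
        rw [hsy, hsx, ← Real.sqrt_div hy.le]
      have h1 : Real.log (y / x) = 2 * Real.log (Real.sqrt (y / x)) := by
        rw [Real.log_sqrt (by positivity)]; ring
      have h2 : Real.log (Real.sqrt (y / x)) ≤ Real.sqrt (y / x) - 1 :=
        Real.log_le_sub_one_of_pos (Real.sqrt_pos.mpr (by positivity))
      rw [h1, hsqrt]
      rw [hsqrt] at h2
      have : sy / sx - 1 ≤ sy / sx := by linarith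
      linarith
    refine le_trans hlog ?_
    rw [show 2*(sy/sx) = (2*sy)/sx by ring, div_le_div_iff₀ hsxp (by positivity)]
    nlinarith

lemma term_bound {x y : ℝ} (k : ℕ) (hk : 1 ≤ k) :
    ‖(Complex.exp (Complex.I * k * x) / k - Complex.exp (Complex.I * k * y) / k)‖
      ≤ |x - y| := by
  have h := term_ftc (x := y) (y := x) k hk
  rw [h]
  have hb : ∀ t ∈ Set.uIoc y x, ‖Complex.I * Complex.exp (Complex.I * k * t)‖ ≤ 1 := by
    intro t _
    rw [norm_mul, Complex.norm_I, one_mul]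
    have hcast : Complex.I * (k:ℂ) * (t:ℂ) = Complex.I * ((k*t : ℝ) : ℂ) := by push_cast; ring
    rw [hcast, abs_exp_I_mul]
  calc ‖(∫ t in y..x, Complex.I * Complex.exp (Complex.I * k * t))‖
      ≤ 1 * |x - y| := intervalIntegral.norm_integral_le_of_norm_le_const hb
    _ = |x - y| := one_mul _

lemma S_conj (M : ℕ) (t : ℝ) :
    ∑ k ∈ Finset.Icc 1 M, Complex.exp (Complex.I * k * (-t : ℝ)) / k
      = starRingEnd ℂ (∑ k ∈ Finset.Icc 1 M, Complex.exp (Complex.I * k * t) / k) := by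
  rw [map_sum]
  apply Finset.sum_congr rfl
  intro k _
  have hconj : (starRingEnd ℂ) (Complex.I * k * t) = Complex.I * k * ((-t : ℝ) : ℂ) := by
    simp [Complex.conj_I]
  rw [map_div₀, ← Complex.exp_conj, hconj, Complex.conj_natCast]

lemma opp_bound (M : ℕ) {a b : ℝ} (ha : 0 < a) (ha' : a ≤ π) (hb : 0 < b) (hb' : b ≤ π) :
    ‖((∑ k ∈ Finset.Icc 1 M, Complex.exp (Complex.I * k * ((-a : ℝ) : ℂ)) / k)
      - ∑ k ∈ Finset.Icc 1 M, Complex.exp (Complex.I * k * (b : ℂ)) / k)‖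
      ≤ (1 + 6 * π) * (a + b) / Real.sqrt (a * b) := by
  have hpi := Real.pi_pos
  set r := Real.sqrt (a * b) with hrdef
  have hr : 0 < r := Real.sqrt_pos.mpr (by positivity)
  have hr2 : r ^ 2 = a * b := Real.sq_sqrt (by positivity)
  have hrπ : r ≤ π := by
    rw [hrdef]
    calc Real.sqrt (a * b) ≤ Real.sqrt (π * π) := Real.sqrt_le_sqrt (by nlinarith)
      _ = π := Real.sqrt_mul_self hpi.le
  set N := Nat.ceil (1 / r) with hNdef
  have hN1 : 1 ≤ N := Nat.one_le_iff_ne_zero.mpr (by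
    intro h
    have := Nat.ceil_eq_zero.mp h
    have : (0:ℝ) < 1 / r := by positivity
    simp [hNdef] at *
    linarith [Nat.le_ceil (1/r)])
  have hNge : 1 / r ≤ (N : ℝ) := Nat.le_ceil _
  have hNle : (N : ℝ) ≤ 1 / r + 1 := (Nat.ceil_lt_add_one (by positivity)).le
  have h2 : 1 / ((N : ℝ) + 1) ≤ r := by
    rw [div_le_iff₀ (by positivity)]
    have h2a : r * (1 / r) = 1 := by field_simp
    nlinarith
  -- abel tail bounds
  have hax : |(-a : ℝ)| ≤ π := by rw [abs_neg, abs_of_pos ha]; exact ha'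
  have hbx : |(b : ℝ)| ≤ π := by rw [abs_of_pos hb]; exact hb'
  have hGa : ∀ m, ‖(∑ k ∈ Finset.Ioc N m,
      Complex.exp (Complex.I * k * ((-a : ℝ) : ℂ)))‖ ≤ π / a := by
    intro m
    have := dirichlet_bound hax (by linarith : (-a:ℝ) ≠ 0) N m
    rwa [abs_neg, abs_of_pos ha] at this
  have hGb : ∀ m, ‖(∑ k ∈ Finset.Ioc N m,
      Complex.exp (Complex.I * k * (b : ℂ)))‖ ≤ π / b := by
    intro m
    have := dirichlet_bound hbx hb.ne' N m
    rwa [abs_of_pos hb] at this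
  have habelA := abel_tail (by positivity) _ N hGa M
  have habelB := abel_tail (by positivity) _ N hGb M
  -- distance
  have hxy : |(-a : ℝ) - b| = a + b := by rw [abs_of_nonpos (by linarith)]; ring
  -- head bound for any finset of indices in Ioc 0 n
  have hhead : ∀ n : ℕ, ‖(∑ k ∈ Finset.Ioc 0 n,
      (Complex.exp (Complex.I * k * ((-a : ℝ) : ℂ)) / k
        - Complex.exp (Complex.I * k * (b : ℂ)) / k))‖ ≤ (n : ℝ) * (a + b) := by
    intro n
    calc ‖(∑ k ∈ Finset.Ioc 0 n, (Complex.exp (Complex.I * k * ((-a : ℝ) : ℂ)) / k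
          - Complex.exp (Complex.I * k * (b : ℂ)) / k))‖
        ≤ ∑ k ∈ Finset.Ioc 0 n, ‖(Complex.exp (Complex.I * k * ((-a : ℝ) : ℂ)) / k
          - Complex.exp (Complex.I * k * (b : ℂ)) / k)‖ := norm_sum_le _ _
      _ ≤ ∑ k ∈ Finset.Ioc 0 n, (a + b) := by
          apply Finset.sum_le_sum
          intro k hk
          have hk1 : 1 ≤ k := (Finset.mem_Ioc.mp hk).1
          have := term_bound (x := (-a : ℝ)) (y := b) k hk1
          rwa [hxy] at this
      _ = (n : ℝ) * (a + b) := by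
          rw [Finset.sum_const, Nat.card_Ioc]
          simp
          ring
  -- final numeric bound target
  have hfinal : (N : ℝ) * (a + b) + ((π / a) / ((N:ℝ)+1) + (π / b) / ((N:ℝ)+1))
      ≤ (1 + 6 * π) * (a + b) / r := by
    have e1 : (π / a) / ((N:ℝ)+1) ≤ (π / a) * r := by
      rw [div_eq_mul_one_div]
      exact mul_le_mul_of_nonneg_left h2 (by positivity)
    have e2 : (π / b) / ((N:ℝ)+1) ≤ (π / b) * r := by
      rw [div_eq_mul_one_div]
      exact mul_le_mul_of_nonneg_left h2 (by positivity)
    have e3 : (π / a) * r + (π / b) * r = π * (a + b) / r := by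
      field_simp
      linear_combination (a+b)*hr2
    have e4 : (N : ℝ) * (a + b) ≤ (1 + π) * (a + b) / r := by
      have : (N : ℝ) ≤ (1 + π) / r := by
        calc (N:ℝ) ≤ 1/r + 1 := hNle
          _ ≤ 1/r + π/r := by
              have : (1:ℝ) ≤ π / r := by rw [le_div_iff₀ hr]; linarith
              linarith
          _ = (1 + π)/r := by ring
      calc (N : ℝ) * (a + b) ≤ ((1 + π)/r) * (a+b) :=
            mul_le_mul_of_nonneg_right this (by positivity)
        _ = (1 + π) * (a + b) / r := by ring
    have e5 : (1 + π) * (a + b) / r + π * (a + b) / r ≤ (1 + 6*π) * (a+b) / r := by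
      rw [← add_div, div_le_div_iff₀ hr hr]
      nlinarith [mul_pos (show (0:ℝ) < a + b by linarith) hr]
    linarith
  -- now case split
  rw [← Finset.sum_sub_distrib]
  rcases le_or_gt M N with hMN | hNM
  · have h0 : Finset.Icc 1 M = Finset.Ioc 0 M := by rw [← Finset.Icc_add_one_left_eq_Ioc, zero_add]
    rw [h0]
    refine le_trans (hhead M) ?_
    have : (M:ℝ) * (a+b) ≤ (N:ℝ) * (a+b) := by
      apply mul_le_mul_of_nonneg_right _ (by positivity)
      exact_mod_cast hMN
    have hnn : (0:ℝ) ≤ (π / a) / ((N:ℝ)+1) + (π / b) / ((N:ℝ)+1) := by positivity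
    linarith
  · have h0 : Finset.Icc 1 M = Finset.Ioc 0 M := by rw [← Finset.Icc_add_one_left_eq_Ioc, zero_add]
    rw [h0]
    have hsplit : (∑ k ∈ Finset.Ioc 0 N, (Complex.exp (Complex.I * k * ((-a : ℝ) : ℂ)) / k
          - Complex.exp (Complex.I * k * (b : ℂ)) / k))
        + (∑ k ∈ Finset.Ioc N M, (Complex.exp (Complex.I * k * ((-a : ℝ) : ℂ)) / k
          - Complex.exp (Complex.I * k * (b : ℂ)) / k))
        = ∑ k ∈ Finset.Ioc 0 M, (Complex.exp (Complex.I * k * ((-a : ℝ) : ℂ)) / k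
          - Complex.exp (Complex.I * k * (b : ℂ)) / k) :=
      Finset.sum_Ioc_consecutive _ (Nat.zero_le N) hNM.le
    rw [← hsplit]
    have htail : ‖(∑ k ∈ Finset.Ioc N M,
        (Complex.exp (Complex.I * k * ((-a : ℝ) : ℂ)) / k
          - Complex.exp (Complex.I * k * (b : ℂ)) / k))‖
        ≤ (π / a) / ((N:ℝ)+1) + (π / b) / ((N:ℝ)+1) := by
      rw [Finset.sum_sub_distrib]
      calc ‖((∑ k ∈ Finset.Ioc N M, Complex.exp (Complex.I * k * ((-a : ℝ) : ℂ)) / k)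
            - ∑ k ∈ Finset.Ioc N M, Complex.exp (Complex.I * k * (b : ℂ)) / k)‖
          ≤ ‖(∑ k ∈ Finset.Ioc N M, Complex.exp (Complex.I * k * ((-a : ℝ) : ℂ)) / k)‖
            + ‖(∑ k ∈ Finset.Ioc N M, Complex.exp (Complex.I * k * (b : ℂ)) / k)‖ :=
            norm_sub_le _ _
        _ ≤ (π / a) / ((N:ℝ)+1) + (π / b) / ((N:ℝ)+1) := by
            push_cast at habelA habelB ⊢
            exact add_le_add habelA habelB
    calc ‖_‖ ≤ ‖(∑ k ∈ Finset.Ioc 0 N,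
            (Complex.exp (Complex.I * k * ((-a : ℝ) : ℂ)) / k
              - Complex.exp (Complex.I * k * (b : ℂ)) / k))‖
          + ‖(∑ k ∈ Finset.Ioc N M,
            (Complex.exp (Complex.I * k * ((-a : ℝ) : ℂ)) / k
              - Complex.exp (Complex.I * k * (b : ℂ)) / k))‖ := norm_add_le _ _
      _ ≤ (N : ℝ) * (a + b) + ((π / a) / ((N:ℝ)+1) + (π / b) / ((N:ℝ)+1)) :=
          add_le_add (hhead N) htail
      _ ≤ (1 + 6 * π) * (a + b) / r := hfinal

lemma pos_pos (M : ℕ) {x y : ℝ} (hx : 0 < x) (hxy : x ≤ y) (hy : y ≤ π) :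
    ‖((∑ k ∈ Finset.Icc 1 M, Complex.exp (Complex.I * k * (y:ℂ)) / k)
      - ∑ k ∈ Finset.Icc 1 M, Complex.exp (Complex.I * k * (x:ℂ)) / k)‖
      ≤ (1 + 6 * π) * (y - x) / Real.sqrt (x * y) := by
  have hpi := Real.pi_pos
  refine le_trans (same_sign_bound M hx hxy hy) ?_
  have h1 : Real.log (y/x) ≤ 4 * (y - x) / Real.sqrt (x*y) := log_le_bound hx hxy
  have hs : 0 < Real.sqrt (x*y) := Real.sqrt_pos.mpr (by nlinarith)
  calc π * Real.log (y/x) ≤ π * (4 * (y - x) / Real.sqrt (x*y)) :=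
        mul_le_mul_of_nonneg_left h1 hpi.le
    _ = (4*π) * (y - x) / Real.sqrt (x*y) := by ring
    _ ≤ (1 + 6 * π) * (y - x) / Real.sqrt (x * y) := by
        rw [div_le_div_iff₀ hs hs]
        nlinarith [mul_nonneg (sub_nonneg.mpr hxy) hs.le, hpi]

lemma pos_pos' (M : ℕ) {x y : ℝ} (hx : 0 < x) (hx' : x ≤ π) (hy : 0 < y) (hy' : y ≤ π) :
    ‖((∑ k ∈ Finset.Icc 1 M, Complex.exp (Complex.I * k * (x:ℂ)) / k)
      - ∑ k ∈ Finset.Icc 1 M, Complex.exp (Complex.I * k * (y:ℂ)) / k)‖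
      ≤ (1 + 6 * π) * |x - y| / Real.sqrt (x * y) := by
  rcases le_total x y with h | h
  · rw [norm_sub_rev]
    have := pos_pos M hx h hy'
    rw [show |x - y| = y - x by rw [abs_sub_comm]; exact _root_.abs_of_nonneg (by linarith)]
    exact this
  · have := pos_pos M hy h hx'
    rw [show |x - y| = x - y from _root_.abs_of_nonneg (by linarith), show x * y = y * x by ring]
    exact this

lemma neg_eq (M : ℕ) (x y : ℝ) :
    ‖((∑ k ∈ Finset.Icc 1 M, Complex.exp (Complex.I * k * ((-x : ℝ) : ℂ)) / k)
      - ∑ k ∈ Finset.Icc 1 M, Complex.exp (Complex.I * k * ((-y : ℝ) : ℂ)) / k)‖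
      = ‖((∑ k ∈ Finset.Icc 1 M, Complex.exp (Complex.I * k * (x : ℂ)) / k)
      - ∑ k ∈ Finset.Icc 1 M, Complex.exp (Complex.I * k * (y : ℂ)) / k)‖ := by
  rw [S_conj M x, S_conj M y, ← map_sub, Complex.norm_conj]

lemma main_est (M : ℕ) {x y : ℝ} (hx : x ∈ Set.Icc (-π) π) (hy : y ∈ Set.Icc (-π) π)
    (hx0 : x ≠ 0) (hy0 : y ≠ 0) :
    ‖((∑ k ∈ Finset.Icc 1 M, Complex.exp (Complex.I * k * (x : ℂ)) / k)
      - ∑ k ∈ Finset.Icc 1 M, Complex.exp (Complex.I * k * (y : ℂ)) / k)‖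
      ≤ (1 + 6 * π) * |x - y| / Real.sqrt |x * y| := by
  obtain ⟨hx1, hx2⟩ := hx
  obtain ⟨hy1, hy2⟩ := hy
  rcases hx0.lt_or_gt with hxneg | hxpos <;> rcases hy0.lt_or_gt with hyneg | hypos
  · -- x < 0, y < 0
    obtain ⟨a, rfl⟩ : ∃ a, x = -a := ⟨-x, by ring⟩
    obtain ⟨b, rfl⟩ : ∃ b, y = -b := ⟨-y, by ring⟩
    have ha : 0 < a := by linarith
    have hb : 0 < b := by linarith
    rw [neg_eq]
    have := pos_pos' M ha (by linarith) hb (by linarith)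
    rwa [show |(-a : ℝ) - -b| = |a - b| by rw [abs_sub_comm]; congr 1; ring,
      show |(-a : ℝ) * -b| = a * b by rw [_root_.abs_of_nonneg (by nlinarith)]; ring] 
  · -- x < 0, y > 0
    obtain ⟨a, rfl⟩ : ∃ a, x = -a := ⟨-x, by ring⟩
    have ha : 0 < a := by linarith
    have := opp_bound M ha (by linarith) hypos hy2
    rwa [show |(-a : ℝ) - y| = a + y by rw [_root_.abs_of_nonpos (by linarith)]; ring,
      show |(-a : ℝ) * y| = a * y by rw [abs_of_nonpos (by nlinarith)]; ring]
  · -- x > 0, y < 0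
    obtain ⟨b, rfl⟩ : ∃ b, y = -b := ⟨-y, by ring⟩
    have hb : 0 < b := by linarith
    rw [norm_sub_rev]
    have := opp_bound M hb (by linarith) hxpos hx2
    rwa [show |x - -b| = b + x by rw [_root_.abs_of_nonneg (by linarith)]; ring,
      show |x * -b| = b * x by rw [abs_of_nonpos (by nlinarith)]; ring]
  · -- both positive
    have := pos_pos' M hxpos hx2 hypos hy2
    rwa [show |x * y| = x * y from _root_.abs_of_nonneg (by positivity)]

theorem exp_sum_diff_bound :
    ∃ K : ℝ, 0 < K ∧ ∀ (M : ℕ), 0 < M → ∀ x y : ℝ,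
      x ∈ Set.Icc (-π) π → y ∈ Set.Icc (-π) π → x * y ≠ 0 → x ≠ y →
      ‖((((x : ℂ) - y)⁻¹) *
        ∑ k ∈ Finset.Icc 1 M,
          (Complex.exp (Complex.I * k * x) - Complex.exp (Complex.I * k * y)) / k)‖
        ≤ K / Real.sqrt |x * y| := by
  have hpi := Real.pi_pos
  refine ⟨1 + 6 * π, by linarith, ?_⟩
  intro M _ x y hx hy hxy0 hne
  have hx0 : x ≠ 0 := fun h => hxy0 (by rw [h, zero_mul])
  have hy0 : y ≠ 0 := fun h => hxy0 (by rw [h, mul_zero])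
  have hT : (∑ k ∈ Finset.Icc 1 M,
      (Complex.exp (Complex.I * k * x) - Complex.exp (Complex.I * k * y)) / k)
      = (∑ k ∈ Finset.Icc 1 M, Complex.exp (Complex.I * k * (x:ℂ)) / k)
        - ∑ k ∈ Finset.Icc 1 M, Complex.exp (Complex.I * k * (y:ℂ)) / k := by
    rw [← Finset.sum_sub_distrib]
    exact Finset.sum_congr rfl fun k _ => sub_div _ _ _
  rw [hT, norm_mul, norm_inv]
  have habsxy : ‖((x:ℂ) - y)‖ = |x - y| := by
    rw [show ((x:ℂ) - y) = ((x - y : ℝ) : ℂ) by push_cast; ring, Complex.norm_real, Real.norm_eq_abs]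
  rw [habsxy]
  have hxyne : 0 < |x - y| := abs_pos.mpr (sub_ne_zero.mpr hne)
  have hs : 0 < Real.sqrt |x * y| := Real.sqrt_pos.mpr (abs_pos.mpr hxy0)
  rw [inv_mul_eq_div, div_le_div_iff₀ hxyne hs]
  have hmain := main_est M hx hy hx0 hy0
  calc ‖_‖ * Real.sqrt |x * y|
      ≤ ((1 + 6 * π) * |x - y| / Real.sqrt |x * y|) * Real.sqrt |x * y| :=
        mul_le_mul_of_nonneg_right hmain hs.le
    _ = (1 + 6 * π) * |x - y| := by field_simp
end

section
/- There exists a constant K > 0 such that for every positive integer M and every y ∈ (0, π), |Σ_{k=1}^{M} sin(ky)/k| ≤ K; i.e., the partial sums of Σ sin(ky)/k are uniformly bounded in M and y. -/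
open scoped Real

open Finset

/-- Closed form for the Dirichlet-type sum of sines. -/
lemma sin_sum_identity (y : ℝ) (n : ℕ) :
    ∑ k ∈ Finset.Ioc 0 n, (2 * Real.sin (y/2) * Real.sin (k * y))
      = Real.cos (y/2) - Real.cos ((2*n+1) * (y/2)) := by
  induction n with
  | zero => simp
  | succ n ih =>
    rw [Finset.sum_Ioc_succ_top (Nat.zero_le _), ih]
    have h := Real.cos_sub_cos ((2*(n:ℝ)+1) * (y/2)) ((2*((n:ℝ)+1)+1) * (y/2))
    have h1 : ((2*(n:ℝ)+1) * (y/2) + (2*((n:ℝ)+1)+1) * (y/2)) / 2 = ((n:ℝ)+1) * y := by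
      ring
    have h2 : ((2*(n:ℝ)+1) * (y/2) - (2*((n:ℝ)+1)+1) * (y/2)) / 2 = -(y/2) := by
      ring
    rw [h1, h2, Real.sin_neg] at h
    push_cast
    nlinarith [h]

/-- Bound on the partial sums of sines. -/
lemma abs_sin_sum_le {y : ℝ} (hy : 0 < y) (hy' : y < π) (n : ℕ) :
    |∑ k ∈ Finset.Ioc 0 n, Real.sin (k * y)| ≤ 1 / Real.sin (y/2) := by
  have hs : 0 < Real.sin (y/2) := Real.sin_pos_of_pos_of_lt_pi (by linarith) (by linarith)
  have hid := sin_sum_identity y n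
  have h2 : (2 * Real.sin (y/2)) * ∑ k ∈ Finset.Ioc 0 n, Real.sin (k * y)
      = Real.cos (y/2) - Real.cos ((2*n+1) * (y/2)) := by
    rw [Finset.mul_sum]; exact hid
  rw [le_div_iff₀ hs]
  have hmul : |∑ k ∈ Finset.Ioc 0 n, Real.sin (k * y)| * Real.sin (y/2)
      = |(Real.cos (y/2) - Real.cos ((2*n+1) * (y/2))) / 2| := by
    rw [← abs_of_pos hs, ← abs_mul]
    congr 1
    nlinarith [h2]
  rw [hmul, abs_div]
  rw [abs_of_pos (by norm_num : (0:ℝ) < 2)]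
  rw [div_le_one (by norm_num : (0:ℝ) < 2)]
  have := abs_sub (Real.cos (y/2)) (Real.cos ((2*n+1) * (y/2)))
  nlinarith [Real.abs_cos_le_one (y/2), Real.abs_cos_le_one ((2*n+1) * (y/2)),
    abs_sub_abs_le_abs_sub (Real.cos (y/2)) (Real.cos ((2*n+1) * (y/2))),
    abs_sub (Real.cos (y/2)) (Real.cos ((2*n+1) * (y/2)))]

/-- Abel summation bound for the tail. -/
lemma abel_tail_bound {y : ℝ} (hy : 0 < y) (hy' : y < π) (N M : ℕ) (hNM : N < M) :
    |∑ k ∈ Finset.Ioc N M, Real.sin (k * y) / k|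
      ≤ 2 / Real.sin (y/2) / (N+1) := by
  set B : ℝ := 1 / Real.sin (y/2) with hB
  have hs : 0 < Real.sin (y/2) := Real.sin_pos_of_pos_of_lt_pi (by linarith) (by linarith)
  have hBpos : 0 < B := by positivity
  set S : ℕ → ℝ := fun n => ∑ k ∈ Finset.Ioc 0 n, Real.sin (k * y) with hS
  have hSb : ∀ n, |S n| ≤ B := fun n => abs_sin_sum_le hy hy' n
  -- key inductive Abel estimate
  have key : ∀ m, N < m →
      |∑ k ∈ Finset.Ioc N m, Real.sin (k * y) / k + S N / (N+1) - S m / m|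
        ≤ B * (1/(N+1) - 1/m) := by
    intro m hm
    induction m, hm using Nat.le_induction with
    | base =>
      rw [Nat.Ioc_succ_singleton, Finset.sum_singleton]
      have hSm : S (N+1) = S N + Real.sin ((N+1 : ℕ) * y) := by
        rw [hS]; simp [Finset.sum_Ioc_succ_top (Nat.zero_le _)]
      have : ((N:ℝ)+1) ≠ 0 := by positivity
      rw [hSm]
      push_cast
      rw [show Real.sin (((N:ℝ)+1) * y) / ((N:ℝ)+1) + S N / ((N:ℝ)+1)
          - (S N + Real.sin (((N:ℝ)+1) * y)) / ((N:ℝ)+1) = 0 by field_simp; ring]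
      simp
    | succ m hm ih =>
      have hm0 : (0:ℝ) < m := by exact_mod_cast Nat.lt_of_lt_of_le (Nat.succ_pos N) hm
      have hm1 : (0:ℝ) < (m:ℝ)+1 := by positivity
      have hsum : ∑ k ∈ Finset.Ioc N (m+1), Real.sin (k * y) / k
          = ∑ k ∈ Finset.Ioc N m, Real.sin (k * y) / k
            + Real.sin ((m+1 : ℕ) * y) / (m+1 : ℕ) := by
        rw [Finset.sum_Ioc_succ_top (le_of_lt hm)]
      have hSm : S (m+1) = S m + Real.sin ((m+1 : ℕ) * y) := by
        rw [hS]; simp [Finset.sum_Ioc_succ_top (Nat.zero_le _)]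
      have hrw : ∑ k ∈ Finset.Ioc N (m+1), Real.sin (k * y) / k + S N / (N+1)
            - S (m+1) / ((m:ℝ)+1)
          = (∑ k ∈ Finset.Ioc N m, Real.sin (k * y) / k + S N / (N+1) - S m / m)
            + S m * (1/m - 1/(m+1)) := by
        rw [hsum, hSm]
        push_cast
        generalize (∑ k ∈ Finset.Ioc N m, Real.sin (k * y) / k) = T
        field_simp
        ring
      push_cast
      rw [hrw]
      have h1 : |S m * (1/(m:ℝ) - 1/((m:ℝ)+1))| ≤ B * (1/(m:ℝ) - 1/((m:ℝ)+1)) := by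
        rw [abs_mul]
        have hpos : (0:ℝ) ≤ 1/(m:ℝ) - 1/((m:ℝ)+1) := by
          rw [sub_nonneg]
          apply one_div_le_one_div_of_le hm0; linarith
        rw [abs_of_nonneg hpos]
        exact mul_le_mul_of_nonneg_right (hSb m) hpos
      calc |(∑ k ∈ Finset.Ioc N m, Real.sin (k * y) / k + S N / (N+1) - S m / m)
            + S m * (1/m - 1/(m+1))|
          ≤ |∑ k ∈ Finset.Ioc N m, Real.sin (k * y) / k + S N / (N+1) - S m / m|
            + |S m * (1/(m:ℝ) - 1/((m:ℝ)+1))| := abs_add_le _ _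
        _ ≤ B * (1/(N+1) - 1/m) + B * (1/(m:ℝ) - 1/((m:ℝ)+1)) := add_le_add ih h1
        _ = B * (1/(N+1) - 1/((m:ℝ)+1)) := by push_cast; ring
  have hM0 : (0:ℝ) < M := by
    have : 0 < M := Nat.lt_of_le_of_lt (Nat.zero_le N) hNM
    exact_mod_cast this
  have hN1 : (0:ℝ) < (N:ℝ)+1 := by positivity
  have hkey := key M hNM
  have h1 : |∑ k ∈ Finset.Ioc N M, Real.sin (k * y) / k|
      ≤ B * (1/(N+1) - 1/M) + |S N| / (N+1) + |S M| / M := by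
    have e : ∑ k ∈ Finset.Ioc N M, Real.sin (k * y) / k
        = (∑ k ∈ Finset.Ioc N M, Real.sin (k * y) / k + S N / (N+1) - S M / M)
          + (S M / M - S N / (N+1)) := by ring
    calc |∑ k ∈ Finset.Ioc N M, Real.sin (k * y) / k|
        = |(∑ k ∈ Finset.Ioc N M, Real.sin (k * y) / k + S N / (N+1) - S M / M)
          + (S M / (M:ℝ) - S N / ((N:ℝ)+1))| := by rw [← e]
      _ ≤ |∑ k ∈ Finset.Ioc N M, Real.sin (k * y) / k + S N / (N+1) - S M / M|
          + |S M / (M:ℝ) - S N / ((N:ℝ)+1)| := abs_add_le _ _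
      _ ≤ B * (1/(N+1) - 1/M) + (|S M / (M:ℝ)| + |S N / ((N:ℝ)+1)|) := by
          refine add_le_add hkey ?_
          exact (abs_sub _ _)
      _ = B * (1/(N+1) - 1/M) + |S N| / (N+1) + |S M| / M := by
          rw [abs_div, abs_div, abs_of_pos hN1, abs_of_pos hM0]; ring
  have h2 : |S N| / ((N:ℝ)+1) ≤ B / ((N:ℝ)+1) := by gcongr; exact hSb N
  have h3 : |S M| / (M:ℝ) ≤ B / (M:ℝ) := by gcongr; exact hSb M
  have h4 : B * (1/((N:ℝ)+1) - 1/(M:ℝ)) + B / ((N:ℝ)+1) + B / (M:ℝ)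
      = 2 * B / ((N:ℝ)+1) := by field_simp; ring
  have : |∑ k ∈ Finset.Ioc N M, Real.sin (k * y) / k| ≤ 2 * B / ((N:ℝ)+1) := by
    rw [← h4]; linarith
  calc |∑ k ∈ Finset.Ioc N M, Real.sin (k * y) / k| ≤ 2 * B / ((N:ℝ)+1) := this
    _ = 2 / Real.sin (y/2) / (N+1) := by rw [hB]; ring

theorem sine_series_partial_sums_uniformly_bounded :
    ∃ K : ℝ, 0 < K ∧ ∀ (M : ℕ) (y : ℝ), y ∈ Set.Ioo 0 π →
      |∑ k ∈ Finset.Icc 1 M, Real.sin (k * y) / k| ≤ K := by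
  refine ⟨1 + 2 * π, by positivity, ?_⟩
  rintro M y ⟨hy, hy'⟩
  have hs : 0 < Real.sin (y/2) := Real.sin_pos_of_pos_of_lt_pi (by linarith) (by linarith)
  -- sin(y/2) ≥ y/π
  have hjordan : y / π ≤ Real.sin (y/2) := by
    simpa using Real.mul_le_sin (x := y/2) (by positivity) (by linarith)
  set N : ℕ := ⌊1/y⌋₊ with hN
  have hNle : (N:ℝ) ≤ 1/y := Nat.floor_le (by positivity)
  have hNlt : 1/y < (N:ℝ)+1 := by exact_mod_cast Nat.lt_floor_add_one (1/y)
  have hIcc : Finset.Icc 1 M = Finset.Ioc 0 M := by rw [← Finset.Icc_add_one_left_eq_Ioc]; rfl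
  rw [hIcc]
  -- bound for initial segments: each term ≤ y
  have hinit : ∀ n : ℕ, (n : ℝ) ≤ 1/y → |∑ k ∈ Finset.Ioc 0 n, Real.sin (k * y) / k| ≤ 1 := by
    intro n hn
    calc |∑ k ∈ Finset.Ioc 0 n, Real.sin (k * y) / k|
        ≤ ∑ k ∈ Finset.Ioc 0 n, |Real.sin (k * y) / k| := Finset.abs_sum_le_sum_abs _ _
      _ ≤ ∑ k ∈ Finset.Ioc 0 n, y := by
          apply Finset.sum_le_sum
          intro k hk
          have hk0 : 0 < k := (Finset.mem_Ioc.mp hk).1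
          have hk0' : (0:ℝ) < k := by exact_mod_cast hk0
          rw [abs_div]
          rw [abs_of_pos hk0']
          rw [div_le_iff₀ hk0']
          calc |Real.sin (k * y)| ≤ |(k:ℝ) * y| := Real.abs_sin_le_abs
            _ = (k:ℝ) * y := abs_of_nonneg (by positivity)
            _ = y * k := by ring
      _ = n * y := by rw [Finset.sum_const, Nat.card_Ioc]; simp [mul_comm]
      _ ≤ (1/y) * y := by
          apply mul_le_mul_of_nonneg_right hn (le_of_lt hy)
      _ = 1 := by field_simp
  by_cases hMN : M ≤ N
  · have : (M:ℝ) ≤ 1/y := le_trans (by exact_mod_cast hMN) hNle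
    have := hinit M this
    nlinarith [Real.pi_pos]
  · push_neg at hMN
    have hsplit : ∑ k ∈ Finset.Ioc 0 M, Real.sin (k * y) / k
        = ∑ k ∈ Finset.Ioc 0 N, Real.sin (k * y) / k
          + ∑ k ∈ Finset.Ioc N M, Real.sin (k * y) / k := by
      rw [Finset.sum_Ioc_consecutive _ (Nat.zero_le N) (le_of_lt hMN)]
    rw [hsplit]
    have h1 := hinit N hNle
    have h2 := abel_tail_bound hy hy' N M hMN
    -- 2 / sin(y/2) / (N+1) ≤ 2π
    have h3 : 2 / Real.sin (y/2) / ((N:ℝ)+1) ≤ 2 * π := by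
      have hyπ : 0 < y / π := by positivity
      have hB : 1 / Real.sin (y/2) ≤ π / y := by
        rw [div_le_div_iff₀ hs hy]
        calc 1 * y = y := one_mul y
          _ = π * (y/π) := by field_simp
          _ ≤ π * Real.sin (y/2) := by
              apply mul_le_mul_of_nonneg_left hjordan (le_of_lt Real.pi_pos)
      have hN1 : (0:ℝ) < (N:ℝ)+1 := by positivity
      have hfrac : 1/((N:ℝ)+1) ≤ y := by
        rw [div_le_iff₀ hN1]
        rw [div_lt_iff₀ hy] at hNlt
        linarith
      calc 2 / Real.sin (y/2) / ((N:ℝ)+1)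
          = 2 * (1 / Real.sin (y/2)) * (1/((N:ℝ)+1)) := by ring
        _ ≤ 2 * (π / y) * y := by
            apply mul_le_mul
            · apply mul_le_mul_of_nonneg_left hB (by norm_num)
            · exact hfrac
            · positivity
            · positivity
        _ = 2 * π := by field_simp
    calc |∑ k ∈ Finset.Ioc 0 N, Real.sin (k * y) / k
          + ∑ k ∈ Finset.Ioc N M, Real.sin (k * y) / k|
        ≤ |∑ k ∈ Finset.Ioc 0 N, Real.sin (k * y) / k|
          + |∑ k ∈ Finset.Ioc N M, Real.sin (k * y) / k| := abs_add_le _ _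
      _ ≤ 1 + 2 * π := add_le_add h1 (h2.trans h3)
end

section
/- For every δ ∈ (0, π) and all x, y ∈ [δ/2, 2π − δ/2] with x ≠ y, |Σ_{k=1}^{M-1} (e^{-ikx} − e^{-iky})/(k(1 − e^{i(x−y)}))| ≤ 1/sin²(δ/4). -/
open scoped Real

lemma chord_integral (a c : ℂ) (k : ℕ) :
    ∫ t in (0:ℝ)..1, (((k:ℂ)+1) * (a + (t:ℂ)*c)^k * c) = (a+c)^(k+1) - a^(k+1) := by
  have h : ∀ t : ℝ, HasDerivAt (fun s : ℝ => (a + (s:ℂ)*c)^(k+1))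
      (((k:ℂ)+1) * (a + (t:ℂ)*c)^k * c) t := by
    intro t
    have h1 : HasDerivAt (fun s : ℝ => (a + (s:ℂ)*c)) c t := by
      simpa using ((Complex.ofRealCLM.hasDerivAt (x := t)).mul_const c).const_add a
    have h2 := (hasDerivAt_pow (k+1) (a + (t:ℂ)*c)).comp t h1
    exact h2.congr_deriv (by simp only [Nat.add_sub_cancel]; push_cast; ring)
  have hcont : IntervalIntegrable (fun t : ℝ => ((k:ℂ)+1) * (a + (t:ℂ)*c)^k * c)
      MeasureTheory.volume 0 1 := by
    apply Continuous.intervalIntegrable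
    continuity
  have := intervalIntegral.integral_eq_sub_of_hasDerivAt (fun t _ => h t) hcont
  simpa using this

lemma cos_le_aux {δ x : ℝ} (hδ0 : 0 < δ) (hδπ : δ < π) (h1 : δ/2 ≤ x)
    (h2 : x ≤ 2*π - δ/2) : Real.cos x ≤ Real.cos (δ/2) := by
  have hπ := Real.pi_pos
  rcases le_total x π with h | h
  · exact Real.cos_le_cos_of_nonneg_of_le_pi (by linarith) h h1
  · rw [← Real.cos_two_pi_sub]
    exact Real.cos_le_cos_of_nonneg_of_le_pi (by linarith) (by linarith) (by linarith)

lemma geom_tail_bound (z : ℂ) (n : ℕ) (ε : ℝ) (hε : 0 < ε)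
    (habs : ‖z‖ ≤ 1) (hre : z.re ≤ 1 - ε) :
    ‖∑ j ∈ Finset.range n, z ^ j‖ ≤ 2 / ε := by
  have habsz1 : ε ≤ ‖z - 1‖ := by
    have h1 : |(z-1).re| ≤ ‖z - 1‖ := Complex.abs_re_le_norm _
    have h2 : (z-1).re = z.re - 1 := by simp
    rw [h2] at h1
    have h3 : ε ≤ |z.re - 1| := by
      rw [abs_sub_comm, abs_of_nonneg (by linarith)]
      linarith
    linarith
  have hzne1 : z ≠ 1 := by
    intro h; rw [h] at habsz1; simp at habsz1; linarith
  rw [geom_sum_eq hzne1, norm_div]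
  rw [div_le_div_iff₀ (by linarith) hε]
  have h1 : ‖z^n - 1‖ ≤ 2 := by
    calc ‖z^n - 1‖ ≤ ‖z^n‖ + ‖(1:ℂ)‖ := by
          simpa using norm_sub_le (z^n) (1:ℂ)
      _ ≤ 1 + 1 := by
          rw [norm_pow, norm_one]
          exact add_le_add (pow_le_one₀ (norm_nonneg _) habs) le_rfl
      _ = 2 := by norm_num
  nlinarith [norm_nonneg (z^n - 1), norm_nonneg (z - 1)]

set_option maxHeartbeats 1000000 in
theorem g2_bound_away_from_diag (δ : ℝ) (hδ : δ ∈ Set.Ioo 0 π) (M : ℕ) (hM : 2 ≤ M)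
    (x y : ℝ) (hx : x ∈ Set.Icc (δ / 2) (2 * π - δ / 2))
    (hy : y ∈ Set.Icc (δ / 2) (2 * π - δ / 2)) (hxy : x ≠ y) :
    ‖(∑ k ∈ Finset.Icc 1 (M - 1),
        (Complex.exp (-Complex.I * k * x) - Complex.exp (-Complex.I * k * y)) /
          (k * (1 - Complex.exp (Complex.I * (x - y)))))‖
      ≤ 1 / (Real.sin (δ / 4)) ^ 2 := by
  obtain ⟨hδ0, hδπ⟩ := hδ
  obtain ⟨hx1, hx2⟩ := hx
  obtain ⟨hy1, hy2⟩ := hy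
  have hπ := Real.pi_pos
  have hs : 0 < Real.sin (δ/4) := Real.sin_pos_of_pos_of_lt_pi (by linarith) (by linarith)
  set w₁ : ℂ := Complex.exp (-Complex.I * x) with hw₁
  set w₂ : ℂ := Complex.exp (-Complex.I * y) with hw₂
  set c : ℂ := w₁ - w₂ with hc
  -- c ≠ 0
  have hcne : c ≠ 0 := by
    rw [hc, sub_ne_zero, hw₁, hw₂]
    intro h
    have h1 : Complex.exp (Complex.I * (↑y - ↑x)) = 1 := by
      have heq : Complex.exp (Complex.I * (↑y - ↑x))
          = Complex.exp (-Complex.I * ↑x) / Complex.exp (-Complex.I * ↑y) := by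
        rw [← Complex.exp_sub]; congr 1; ring
      rw [heq, h, div_self (Complex.exp_ne_zero _)]
    obtain ⟨n, hn⟩ := Complex.exp_eq_one_iff.mp h1
    have h2 : ((y - x : ℝ) : ℂ) = (n : ℂ) * (2 * π) := by
      have := hn
      have hI : (Complex.I * (↑y - ↑x)) = ((y - x : ℝ) : ℂ) * Complex.I := by
        push_cast; ring
      rw [hI] at this
      have : ((y - x : ℝ) : ℂ) * Complex.I = ((n : ℂ) * (2 * π)) * Complex.I := by
        rw [this]; ring
      exact mul_right_cancel₀ Complex.I_ne_zero this
    have h3 : (y - x : ℝ) = (n : ℝ) * (2 * π) := by exact_mod_cast h2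
    have hlt : |y - x| < 2 * π := by
      rw [abs_lt]; constructor <;> linarith
    have hn0 : n = 0 := by
      by_contra hn0
      have : (1:ℝ) ≤ |(n:ℝ)| := by
        have : (1:ℤ) ≤ |n| := Int.one_le_abs hn0
        exact_mod_cast this
      have : 2 * π ≤ |y - x| := by
        rw [h3, abs_mul, abs_of_pos (by linarith : (0:ℝ) < 2 * π)]
        nlinarith
      linarith
    rw [hn0] at h3
    simp at h3
    exact hxy (by linarith)
  -- rewrite each summand
  have hd : c * Complex.exp (Complex.I * x) = 1 - Complex.exp (Complex.I * (x - y)) := by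
    rw [hc, hw₁, hw₂, sub_mul, ← Complex.exp_add, ← Complex.exp_add]
    rw [show -Complex.I * ↑x + Complex.I * ↑x = 0 by ring, Complex.exp_zero]
    congr 2
    push_cast
    ring
  have hexpne : Complex.exp (Complex.I * x) ≠ 0 := Complex.exp_ne_zero _
  have hint : ∀ k : ℕ, 1 ≤ k →
      (w₁^k - w₂^k) / ((k:ℂ) * c) = ∫ t in (0:ℝ)..1, (w₂ + (t:ℂ)*c)^(k-1) := by
    intro k hk
    obtain ⟨n, rfl⟩ : ∃ n, k = n + 1 := ⟨k-1, (Nat.succ_pred_eq_of_pos hk).symm⟩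
    have h0 := chord_integral w₂ c n
    have h2 : (∫ t in (0:ℝ)..1, (w₂ + (t:ℂ)*c)^n) * (((n:ℂ)+1) * c)
        = (w₂+c)^(n+1) - w₂^(n+1) := by
      rw [← intervalIntegral.integral_mul_const, ← h0]
      apply intervalIntegral.integral_congr
      intro t _
      ring
    have hw : w₂ + c = w₁ := by rw [hc]; ring
    rw [hw] at h2
    have hkc : ((n:ℂ)+1) * c ≠ 0 := by
      apply mul_ne_zero _ hcne
      intro h
      have : ((n:ℝ)+1) = 0 := by exact_mod_cast h
      nlinarith [Nat.cast_nonneg (α := ℝ) n]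
    have hkc' : (((n+1:ℕ)):ℂ) * c ≠ 0 := by push_cast; exact hkc
    simp only [Nat.add_sub_cancel]
    rw [div_eq_iff hkc']
    rw [← h2]
    push_cast
    ring
  have hterm : ∀ k ∈ Finset.Icc 1 (M-1),
      (Complex.exp (-Complex.I * k * x) - Complex.exp (-Complex.I * k * y)) /
          ((k:ℂ) * (1 - Complex.exp (Complex.I * (x - y))))
      = Complex.exp (-Complex.I * x) * ∫ t in (0:ℝ)..1, (w₂ + (t:ℂ)*c)^(k-1) := by
    intro k hk
    obtain ⟨hk1, _⟩ := Finset.mem_Icc.mp hk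
    have e1 : Complex.exp (-Complex.I * k * x) = w₁ ^ k := by
      rw [hw₁, ← Complex.exp_nat_mul]; congr 1; push_cast; ring
    have e2 : Complex.exp (-Complex.I * k * y) = w₂ ^ k := by
      rw [hw₂, ← Complex.exp_nat_mul]; congr 1; push_cast; ring
    rw [e1, e2, ← hint k hk1, ← hd]
    have hkne : (k:ℂ) ≠ 0 := by
      simp only [ne_eq, Nat.cast_eq_zero]; omega
    have hinv : Complex.exp (-Complex.I * x) = (Complex.exp (Complex.I * x))⁻¹ := by
      rw [← Complex.exp_neg]; congr 1; ring
    rw [hinv]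
    field_simp
  rw [Finset.sum_congr rfl hterm, ← Finset.mul_sum]
  -- move sum inside integral
  have hintg : ∀ k ∈ Finset.Icc 1 (M-1), IntervalIntegrable
      (fun t : ℝ => (w₂ + (t:ℂ)*c)^(k-1)) MeasureTheory.volume 0 1 := by
    intro k _
    apply Continuous.intervalIntegrable
    continuity
  rw [← intervalIntegral.integral_finset_sum hintg]
  rw [norm_mul]
  have habs1 : ‖Complex.exp (-Complex.I * x)‖ = 1 := by
    rw [Complex.norm_exp]
    simp
  rw [habs1, one_mul]
  -- pointwise bound
  have hcosle : Real.cos (δ/2) = 1 - 2 * Real.sin (δ/4)^2 := by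
    have h1 : Real.cos (2 * (δ/4)) = 2 * Real.cos (δ/4)^2 - 1 := Real.cos_two_mul _
    have h2 : Real.sin (δ/4)^2 + Real.cos (δ/4)^2 = 1 := Real.sin_sq_add_cos_sq _
    have : (2:ℝ) * (δ/4) = δ/2 := by ring
    rw [this] at h1
    nlinarith
  have hbound : ∀ t ∈ Set.uIoc (0:ℝ) 1,
      ‖∑ k ∈ Finset.Icc 1 (M-1), (w₂ + (t:ℂ)*c)^(k-1)‖ ≤ 1 / Real.sin (δ/4)^2 := by
    intro t ht
    rw [Set.uIoc_of_le (by norm_num : (0:ℝ) ≤ 1)] at ht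
    obtain ⟨ht0, ht1⟩ := ht
    have ht0' : 0 ≤ t := le_of_lt ht0
    set z : ℂ := w₂ + (t:ℂ)*c with hz
    -- reindex to geometric sum
    have hre : ∑ k ∈ Finset.Icc 1 (M-1), z^(k-1) = ∑ j ∈ Finset.range (M-1), z^j := by
      rw [← Finset.Ico_add_one_right_eq_Icc, show M-1+1 = M by omega,
        Finset.sum_Ico_eq_sum_range]
      apply Finset.sum_congr rfl
      intro i _
      congr 1
      omega
    -- real part bound
    have hrew1 : w₁.re = Real.cos x := by
      rw [hw₁, show -Complex.I * (x:ℂ) = ((-x:ℝ):ℂ) * Complex.I by push_cast; ring,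
        Complex.exp_ofReal_mul_I_re, Real.cos_neg]
    have hrew2 : w₂.re = Real.cos y := by
      rw [hw₂, show -Complex.I * (y:ℂ) = ((-y:ℝ):ℂ) * Complex.I by push_cast; ring,
        Complex.exp_ofReal_mul_I_re, Real.cos_neg]
    have hzre : z.re = (1-t) * Real.cos y + t * Real.cos x := by
      rw [hz, hc]
      simp [Complex.add_re, Complex.mul_re, Complex.sub_re, hrew1, hrew2]
      ring
    have hcx : Real.cos x ≤ Real.cos (δ/2) := cos_le_aux hδ0 hδπ hx1 hx2
    have hcy : Real.cos y ≤ Real.cos (δ/2) := cos_le_aux hδ0 hδπ hy1 hy2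
    have hzrele : z.re ≤ 1 - 2 * Real.sin (δ/4)^2 := by
      rw [hzre, ← hcosle]
      nlinarith
    have hsq : (0:ℝ) < Real.sin (δ/4)^2 := pow_pos hs 2
    have hε2 : (0:ℝ) < 2 * Real.sin (δ/4)^2 := by linarith
    have habsw1 : ‖w₁‖ = 1 := by rw [hw₁, Complex.norm_exp]; simp
    have habsw2 : ‖w₂‖ = 1 := by rw [hw₂, Complex.norm_exp]; simp
    have habsz : ‖z‖ ≤ 1 := by
      have hzcomb : z = ((1-t:ℝ):ℂ) * w₂ + ((t:ℝ):ℂ) * w₁ := by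
        rw [hz, hc]; push_cast; ring
      rw [hzcomb]
      calc ‖((1-t:ℝ):ℂ) * w₂ + ((t:ℝ):ℂ) * w₁‖
          ≤ ‖((1-t:ℝ):ℂ) * w₂‖ + ‖((t:ℝ):ℂ) * w₁‖ :=
            norm_add_le _ _
        _ = |1-t| * 1 + |t| * 1 := by
            rw [norm_mul, norm_mul, habsw1, habsw2, Complex.norm_real, Complex.norm_real, Real.norm_eq_abs, Real.norm_eq_abs]
        _ ≤ 1 := by rw [abs_of_nonneg (by linarith), abs_of_nonneg ht0']; linarith
    have hfin := geom_tail_bound z (M-1) (2 * Real.sin (δ/4)^2) hε2 habsz hzrele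
    rw [hre]
    calc ‖∑ j ∈ Finset.range (M-1), z^j‖ ≤ 2 / (2 * Real.sin (δ/4)^2) := hfin
      _ = 1 / Real.sin (δ/4)^2 := by
          rw [div_eq_div_iff (ne_of_gt hε2) (ne_of_gt hsq)]; ring
  have := intervalIntegral.norm_integral_le_of_norm_le_const hbound
  simpa using this
end

section
/- Let f be a positive measurable function on (0, π] of the form f(x) = x^{−a} L(1/x) for a ∈ (0,1) and L slowly varying at ∞. Then ∫_0^x f(t) dt ~ x^{1−a} L(1/x)/(1−a) as x → 0⁺. -/
open scoped Real

open Filter MeasureTheory Set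

/-- `L` is slowly varying at `∞`. -/
def SlowlyVarying (L : ℝ → ℝ) : Prop :=
  ∀ l : ℝ, 0 < l → Filter.Tendsto (fun u => L (l * u) / L u) Filter.atTop (nhds 1)

/-- Pointwise slow variation in additive/logarithmic coordinates. -/
lemma karamata_aux_log (L : ℝ → ℝ) (hL : SlowlyVarying L)
    (hLpos : ∀ u, 0 < u → 0 < L u) (t : ℝ) :
    Tendsto (fun x => Real.log (L (Real.exp (x + t))) - Real.log (L (Real.exp x)))
      atTop (nhds 0) := by
  have h1 : Tendsto (fun u => L (Real.exp t * u) / L u) atTop (nhds 1) :=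
    hL _ (Real.exp_pos t)
  have h2 := h1.comp Real.tendsto_exp_atTop
  have h3 := (Real.continuousAt_log one_ne_zero).tendsto.comp h2
  rw [Real.log_one] at h3
  refine h3.congr fun x => ?_
  have hp1 : 0 < L (Real.exp t * Real.exp x) := hLpos _ (by positivity)
  have hp2 : 0 < L (Real.exp x) := hLpos _ (Real.exp_pos x)
  simp only [Function.comp]
  rw [Real.log_div hp1.ne' hp2.ne', ← Real.exp_add, add_comm t x]

/-- The uniform convergence theorem for additively slowly varying measurable functions. -/
lemma karamata_aux_ucv (h : ℝ → ℝ) (hmeas : Measurable h)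
    (hpt : ∀ t : ℝ, Tendsto (fun x => h (x + t) - h x) atTop (nhds 0))
    {ε : ℝ} (hε : 0 < ε) :
    ∃ X : ℝ, ∀ x ≥ X, ∀ u ∈ Set.Icc (0:ℝ) 1, |h (x + u) - h x| ≤ ε := by
  by_contra hc
  push_neg at hc
  choose x hx u hu1 hu2 using hc
  -- the key measure-theoretic fact
  have key : ∀ c : ℕ → ℝ, Tendsto c atTop atTop → ∀ aa bb : ℝ,
      Tendsto (fun n => volume (Icc aa bb ∩ {t | ε/2 ≤ |h (c n + t) - h (c n)|}))
        atTop (nhds 0) := by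
    intro c hcT aa bb
    set S : ℕ → Set ℝ := fun n => Icc aa bb ∩ {t | ε/2 ≤ |h (c n + t) - h (c n)|} with hS
    have hSm : ∀ n, MeasurableSet (S n) := by
      intro n
      refine measurableSet_Icc.inter ?_
      exact measurableSet_le measurable_const
        ((hmeas.comp (measurable_const.add measurable_id)).sub measurable_const).abs
    have := tendsto_lintegral_of_dominated_convergence (μ := (volume : Measure ℝ))
      (F := fun n t => Set.indicator (S n) (1 : ℝ → ENNReal) t)
      (f := fun _ => 0)
      (bound := Set.indicator (Icc aa bb) (1 : ℝ → ENNReal))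
      (fun n => (measurable_one.indicator (hSm n)))
      (fun n => Filter.Eventually.of_forall fun t =>
        Set.indicator_le_indicator_of_subset (inter_subset_left) (fun _ => zero_le) t)
      (by
        rw [lintegral_indicator_one measurableSet_Icc]
        simp [Real.volume_Icc])
      (by
        refine Filter.Eventually.of_forall fun t => ?_
        by_cases ht : t ∈ Icc aa bb
        · have h1 : Tendsto (fun n => h (c n + t) - h (c n)) atTop (nhds 0) :=
            (hpt t).comp hcT
          have h2 : ∀ᶠ n in atTop, |h (c n + t) - h (c n)| < ε/2 := by
            have := (NormedAddCommGroup.tendsto_nhds_zero.mp h1) (ε/2) (by linarith)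
            simpa [Real.norm_eq_abs] using this
          refine tendsto_const_nhds.congr' ?_
          filter_upwards [h2] with n hn
          have : t ∉ S n := by
            intro hts
            exact absurd hts.2 (not_le.mpr hn)
          simp [this]
        · have : ∀ n, t ∉ S n := fun n hts => ht hts.1
          simp [this])
    have heq : ∀ n, (∫⁻ t, Set.indicator (S n) (1 : ℝ → ENNReal) t) = volume (S n) :=
      fun n => lintegral_indicator_one (hSm n)
    simp only [lintegral_zero] at this
    exact this.congr fun n => heq n
  -- build the two diverging sequences
  set y : ℕ → ℝ := fun n => x n with hy
  have hyT : Tendsto y atTop atTop :=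
    tendsto_atTop_mono (fun n => hx (n : ℝ)) tendsto_natCast_atTop_atTop
  set z : ℕ → ℝ := fun n => x n + u n with hz
  have hzT : Tendsto z atTop atTop :=
    tendsto_atTop_mono (fun n => le_add_of_nonneg_right (hu1 (n : ℝ)).1) hyT
  have hA := key y hyT 0 2
  have hC := key z hzT (-1) 2
  have hmem : {w : ENNReal | w < 1} ∈ nhds (0 : ENNReal) :=
    isOpen_Iio.mem_nhds (by norm_num)
  obtain ⟨n, hAn, hCn⟩ := ((hA.eventually hmem).and (hC.eventually hmem)).exists
  set A := Icc (0:ℝ) 2 ∩ {t | ε/2 ≤ |h (y n + t) - h (y n)|} with hAdef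
  set C := Icc (-1:ℝ) 2 ∩ {t | ε/2 ≤ |h (z n + t) - h (z n)|} with hCdef
  have hsub : Icc (0:ℝ) 2 ⊆ A ∪ (fun w => w + (-(u (n:ℝ)))) ⁻¹' C := by
    intro t ht
    by_cases htA : t ∈ A
    · exact Or.inl htA
    · right
      have ht2 : ¬ ε/2 ≤ |h (y n + t) - h (y n)| := fun hcon => htA ⟨ht, hcon⟩
      push_neg at ht2
      constructor
      · constructor
        · have := (hu1 (n:ℝ)).2; have := ht.1; simp only [hz, hy]; linarith
        · have := (hu1 (n:ℝ)).1; have := ht.2; simp only [hz, hy]; linarith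
      · show ε/2 ≤ |h (z n + (t + -u (n:ℝ))) - h (z n)|
        have harg : z n + (t + -u (n:ℝ)) = y n + t := by simp only [hz, hy]; ring
        rw [harg]
        have hbig := hu2 (n : ℝ)
        have hzn : z n = y n + u (n:ℝ) := rfl
        rw [hzn]
        have := abs_sub_abs_le_abs_sub (h (y n + u (n:ℝ)) - h (y n)) (h (y n + t) - h (y n))
        have habs : |h (y n + u (n:ℝ)) - h (y n) - (h (y n + t) - h (y n))|
            = |h (y n + t) - h (y n + u (n:ℝ))| := by
          rw [← abs_neg]; congr 1; ring
        rw [habs] at this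
        linarith
  have hvol : volume (Icc (0:ℝ) 2) ≤ volume A + volume C := by
    calc volume (Icc (0:ℝ) 2) ≤ volume (A ∪ (fun w => w + (-(u (n:ℝ)))) ⁻¹' C) :=
          measure_mono hsub
      _ ≤ volume A + volume ((fun w => w + (-(u (n:ℝ)))) ⁻¹' C) := measure_union_le _ _
      _ = volume A + volume C := by rw [measure_preimage_add_right]
  rw [Real.volume_Icc] at hvol
  have h2 : (ENNReal.ofReal (2 - 0)) = 2 := by norm_num
  rw [h2] at hvol
  have hlt : volume A + volume C < 2 := by
    have h' := ENNReal.add_lt_add hAn hCn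
    rwa [one_add_one_eq_two] at h'
  exact absurd (lt_of_le_of_lt hvol hlt) (lt_irrefl _)

/-- Chaining the uniform bound over unit steps. -/
lemma karamata_aux_chain (h : ℝ → ℝ) (X δ : ℝ) (hδ : 0 ≤ δ)
    (hB : ∀ x ≥ X, ∀ u ∈ Set.Icc (0:ℝ) 1, |h (x + u) - h x| ≤ δ) :
    ∀ x ≥ X, ∀ s, 0 ≤ s → |h (x + s) - h x| ≤ δ * (s + 1) := by
  have main : ∀ n : ℕ, ∀ x ≥ X, ∀ s, 0 ≤ s → s ≤ (n : ℝ) → |h (x + s) - h x| ≤ δ * (s + 1) := by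
    intro n
    induction n with
    | zero =>
      intro x hxX s hs0 hs1
      have hs : s = 0 := le_antisymm (by exact_mod_cast hs1) hs0
      subst hs
      simp only [add_zero, sub_self, abs_zero]
      nlinarith
    | succ n ih =>
      intro x hxX s hs0 hsn
      by_cases hs1 : s ≤ 1
      · have := hB x hxX s ⟨hs0, hs1⟩
        nlinarith [abs_nonneg (h (x + s) - h x)]
      · push_neg at hs1
        have hsn' : s - 1 ≤ (n : ℝ) := by push_cast at hsn; linarith
        have h1 := ih (x + 1) (by linarith) (s - 1) (by linarith) hsn'
        have harg : x + 1 + (s - 1) = x + s := by ring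
        rw [harg] at h1
        have h2 := hB x hxX 1 ⟨zero_le_one, le_refl 1⟩
        calc |h (x + s) - h x| ≤ |h (x + s) - h (x + 1)| + |h (x + 1) - h x| :=
              abs_sub_le _ _ _
          _ ≤ δ * (s - 1 + 1) + δ := add_le_add h1 h2
          _ = δ * (s + 1) := by ring
  intro x hxX s hs
  exact main ⌈s⌉₊ x hxX s hs (Nat.le_ceil s)

/-- Potter-type upper bound. -/
lemma karamata_aux_potter (L : ℝ → ℝ) (hL : SlowlyVarying L)
    (hLpos : ∀ u, 0 < u → 0 < L u) (hLmeas : Measurable L) {δ : ℝ} (hδ : 0 < δ) :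
    ∃ U : ℝ, 1 ≤ U ∧ ∀ u ≥ U, ∀ l ≥ (1:ℝ),
      L (l * u) / L u ≤ Real.exp δ * l ^ δ := by
  set h : ℝ → ℝ := fun x => Real.log (L (Real.exp x)) with hh
  have hmeas : Measurable h := Real.measurable_log.comp (hLmeas.comp Real.measurable_exp)
  have hpt : ∀ t : ℝ, Tendsto (fun x => h (x + t) - h x) atTop (nhds 0) :=
    fun t => karamata_aux_log L hL hLpos t
  obtain ⟨X, hX⟩ := karamata_aux_ucv h hmeas hpt hδ
  refine ⟨max 1 (Real.exp X), le_max_left _ _, ?_⟩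
  intro u hu l hl
  have hu1 : (1:ℝ) ≤ u := le_trans (le_max_left _ _) hu
  have hu0 : 0 < u := lt_of_lt_of_le one_pos hu1
  have hl0 : 0 < l := lt_of_lt_of_le one_pos hl
  have hlogu : X ≤ Real.log u := by
    have : Real.exp X ≤ u := le_trans (le_max_right _ _) hu
    calc X = Real.log (Real.exp X) := (Real.log_exp X).symm
      _ ≤ Real.log u := Real.log_le_log (Real.exp_pos X) this
  have hchain := karamata_aux_chain h X δ hδ.le hX (Real.log u) hlogu (Real.log l)
    (Real.log_nonneg hl)
  have harg1 : Real.exp (Real.log u + Real.log l) = l * u := by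
    rw [Real.exp_add, Real.exp_log hu0, Real.exp_log hl0, mul_comm]
  have harg2 : Real.exp (Real.log u) = u := Real.exp_log hu0
  have hchain' : Real.log (L (l * u)) - Real.log (L u) ≤ δ * (Real.log l + 1) := by
    have := le_trans (le_abs_self _) hchain
    simpa only [hh, harg1, harg2] using this
  have hLlu : 0 < L (l * u) := hLpos _ (by positivity)
  have hLu : 0 < L u := hLpos _ hu0
  have : L (l * u) / L u = Real.exp (Real.log (L (l * u)) - Real.log (L u)) := by
    rw [Real.exp_sub, Real.exp_log hLlu, Real.exp_log hLu]
  rw [this]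
  calc Real.exp (Real.log (L (l * u)) - Real.log (L u))
      ≤ Real.exp (δ * (Real.log l + 1)) := Real.exp_le_exp.mpr hchain'
    _ = Real.exp δ * l ^ δ := by
        rw [Real.rpow_def_of_pos hl0, ← Real.exp_add]
        ring_nf

theorem karamata_integral_at_zero (a : ℝ) (ha : a ∈ Set.Ioo (0 : ℝ) 1)
    (L : ℝ → ℝ) (hL : SlowlyVarying L) (hLpos : ∀ u, 0 < u → 0 < L u)
    (hLmeas : Measurable L)
    (f : ℝ → ℝ) (hf : ∀ x ∈ Set.Ioc (0 : ℝ) π, f x = x ^ (-a) * L (1 / x))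
    (hfpos : ∀ x ∈ Set.Ioc (0 : ℝ) π, 0 < f x)
    (hint : MeasureTheory.IntegrableOn f (Set.Ioc 0 π)) :
    Filter.Tendsto (fun x => (∫ t in (0 : ℝ)..x, f t) / (x ^ (1 - a) * L (1 / x) / (1 - a)))
      (nhdsWithin 0 (Set.Ioi 0)) (nhds 1) := by
  obtain ⟨ha0, ha1⟩ := ha
  set δ : ℝ := (1 - a) / 2 with hδdef
  have hδ : 0 < δ := by simp only [hδdef]; linarith
  obtain ⟨U, hU1, hU⟩ := karamata_aux_potter L hL hLpos hLmeas hδ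
  have hU0 : 0 < U := lt_of_lt_of_le one_pos hU1
  -- The normalized integrand
  set g : ℝ → ℝ → ℝ := fun x s => s ^ (-a) * L (1 / (x * s)) / L (1 / x) with hgdef
  -- Dominated convergence
  have hDCT : Tendsto (fun x => ∫ s in Ioc (0:ℝ) 1, g x s) (nhdsWithin 0 (Set.Ioi 0))
      (nhds (∫ s in Ioc (0:ℝ) 1, s ^ (-a))) := by
    apply MeasureTheory.tendsto_integral_filter_of_dominated_convergence
      (bound := fun s => Real.exp δ * s ^ (-(a + δ)))
    · refine Filter.Eventually.of_forall fun x => ?_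
      apply Measurable.aestronglyMeasurable
      have m1 : Measurable fun s : ℝ => s ^ (-a) := by measurability
      exact ((m1.mul
        (hLmeas.comp (measurable_const.div (measurable_const.mul measurable_id)))).div_const _)
    · have hmem : Ioo (0:ℝ) (1/U) ∈ nhdsWithin 0 (Set.Ioi 0) :=
        Ioo_mem_nhdsGT_of_mem ⟨le_refl 0, by positivity⟩
      filter_upwards [hmem] with x hx
      obtain ⟨hx0, hxU⟩ := hx
      rw [ae_restrict_iff' measurableSet_Ioc]
      refine Filter.Eventually.of_forall fun s hs => ?_
      obtain ⟨hs0, hs1⟩ := hs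
      have hxs : 0 < x * s := mul_pos hx0 hs0
      have hLxs : 0 < L (1 / (x * s)) := hLpos _ (by positivity)
      have hLx : 0 < L (1 / x) := hLpos _ (by positivity)
      have hgnonneg : 0 ≤ g x s := by
        apply div_nonneg _ hLx.le
        exact mul_nonneg (Real.rpow_nonneg hs0.le _) hLxs.le
      rw [Real.norm_eq_abs, abs_of_nonneg hgnonneg]
      -- apply Potter's bound with u = 1/x, l = 1/s
      have huU : U ≤ 1 / x := by
        rw [le_div_iff₀ hx0]
        have h1 : x * U < 1 := (lt_div_iff₀ hU0).mp hxU
        calc U * x = x * U := mul_comm _ _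
          _ ≤ 1 := h1.le
      have hl1 : (1:ℝ) ≤ 1 / s := one_le_one_div hs0 hs1
      have harg : (1 / s) * (1 / x) = 1 / (x * s) := by
        field_simp
      have hP := hU (1/x) huU (1/s) hl1
      rw [harg] at hP
      have hratio : L (1 / (x * s)) / L (1 / x) ≤ Real.exp δ * (1/s) ^ δ := hP
      have hpow : (1/s : ℝ) ^ δ = s ^ (-δ) := by
        rw [one_div, Real.inv_rpow hs0.le, ← Real.rpow_neg hs0.le]
      rw [hpow] at hratio
      have hsa : (0:ℝ) ≤ s ^ (-a) := Real.rpow_nonneg hs0.le _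
      calc g x s = s ^ (-a) * (L (1 / (x * s)) / L (1 / x)) := by
            simp only [hgdef]; ring
        _ ≤ s ^ (-a) * (Real.exp δ * s ^ (-δ)) :=
            mul_le_mul_of_nonneg_left hratio hsa
        _ = Real.exp δ * s ^ (-(a + δ)) := by
            rw [neg_add, Real.rpow_add hs0]
            ring
    · have hint' : IntervalIntegrable (fun s : ℝ => s ^ (-(a + δ))) volume 0 1 :=
        intervalIntegral.intervalIntegrable_rpow' (by simp only [hδdef]; linarith)
      have := (intervalIntegrable_iff_integrableOn_Ioc_of_le zero_le_one).mp hint'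
      exact this.const_mul _
    · rw [ae_restrict_iff' measurableSet_Ioc]
      refine Filter.Eventually.of_forall fun s hs => ?_
      obtain ⟨hs0, hs1⟩ := hs
      have hL1 : Tendsto (fun u => L ((1/s) * u) / L u) atTop (nhds 1) :=
        hL (1/s) (by positivity)
      have hinv : Tendsto (fun x : ℝ => 1 / x) (nhdsWithin 0 (Set.Ioi 0)) atTop := by
        simpa [one_div] using tendsto_inv_nhdsGT_zero (𝕜 := ℝ)
      have h2 : Tendsto (fun x => L ((1/s) * (1/x)) / L (1/x)) (nhdsWithin 0 (Set.Ioi 0))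
          (nhds 1) := hL1.comp hinv
      have h3 : Tendsto (fun x => L (1 / (x * s)) / L (1/x)) (nhdsWithin 0 (Set.Ioi 0))
          (nhds 1) := by
        refine h2.congr fun x => ?_
        congr 2
        field_simp
      have := h3.const_mul (s ^ (-a))
      rw [mul_one] at this
      refine this.congr fun x => ?_
      simp only [hgdef]
      ring
  have hval : (∫ s in Ioc (0:ℝ) 1, s ^ (-a)) = 1 / (1 - a) := by
    rw [← intervalIntegral.integral_of_le zero_le_one]
    rw [integral_rpow (Or.inl (by linarith : (-1:ℝ) < -a))]
    rw [Real.one_rpow, Real.zero_rpow (by linarith : -a + 1 ≠ 0)]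
    rw [show -a + 1 = 1 - a by ring]
    norm_num
  rw [hval] at hDCT
  have hfinal : Tendsto (fun x => (1 - a) * ∫ s in Ioc (0:ℝ) 1, g x s)
      (nhdsWithin 0 (Set.Ioi 0)) (nhds 1) := by
    have := hDCT.const_mul (1 - a)
    rwa [mul_one_div_cancel (by linarith : (1:ℝ) - a ≠ 0)] at this
  -- eventual equality of the two expressions
  refine hfinal.congr' ?_
  have hmem : Ioo (0:ℝ) (min π (1/U)) ∈ nhdsWithin 0 (Set.Ioi 0) :=
    Ioo_mem_nhdsGT_of_mem ⟨le_refl 0, by positivity⟩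
  filter_upwards [hmem] with x hx
  obtain ⟨hx0, hxm⟩ := hx
  have hxπ : x ≤ π := le_of_lt (lt_of_lt_of_le hxm (min_le_left _ _))
  have hLx : 0 < L (1 / x) := hLpos _ (by positivity)
  have hxpow : 0 < x ^ (1 - a) := Real.rpow_pos_of_pos hx0 _
  -- substitution t = x * s
  have e1 : (∫ s in (0:ℝ)..1, f (x * s)) = x⁻¹ • ∫ t in (0:ℝ)..x, f t := by
    have := intervalIntegral.integral_comp_mul_left (a := (0:ℝ)) (b := 1) f hx0.ne'
    simpa using this
  have e1' : (∫ t in (0:ℝ)..x, f t) = x * ∫ s in (0:ℝ)..1, f (x * s) := by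
    rw [e1, smul_eq_mul]
    field_simp
  have e2 : (∫ s in (0:ℝ)..1, f (x * s)) = ∫ s in Ioc (0:ℝ) 1, f (x * s) :=
    intervalIntegral.integral_of_le zero_le_one
  have e3 : (∫ s in Ioc (0:ℝ) 1, f (x * s))
      = ∫ s in Ioc (0:ℝ) 1, x ^ (-a) * (s ^ (-a) * L (1 / (x * s))) := by
    apply setIntegral_congr_fun measurableSet_Ioc
    intro s hs
    obtain ⟨hs0, hs1⟩ := hs
    have hxs0 : 0 < x * s := mul_pos hx0 hs0
    have hxsπ : x * s ≤ π := le_trans (by nlinarith) hxπ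
    show f (x * s) = x ^ (-a) * (s ^ (-a) * L (1 / (x * s)))
    rw [hf (x * s) ⟨hxs0, hxsπ⟩, Real.mul_rpow hx0.le hs0.le]
    ring
  have e4 : (∫ s in Ioc (0:ℝ) 1, x ^ (-a) * (s ^ (-a) * L (1 / (x * s))))
      = x ^ (-a) * ∫ s in Ioc (0:ℝ) 1, s ^ (-a) * L (1 / (x * s)) :=
    integral_const_mul _ _
  have e5 : (∫ s in Ioc (0:ℝ) 1, g x s)
      = (∫ s in Ioc (0:ℝ) 1, s ^ (-a) * L (1 / (x * s))) / L (1 / x) :=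
    integral_div _ _
  have hxpoweq : x ^ (1 - a) = x * x ^ (-a) := by
    rw [show (1 : ℝ) - a = 1 + -a by ring, Real.rpow_add hx0, Real.rpow_one]
  rw [e1']
  rw [e2]
  rw [e3, e4, e5, hxpoweq]
  have hxa : (0:ℝ) < x ^ (-a) := Real.rpow_pos_of_pos hx0 _
  have h1a : (1:ℝ) - a ≠ 0 := by linarith
  field_simp
end

section
/- Let (μ_n) and μ be Borel probability measures supported on [a, +∞) for some real a. If for every x < a, ∫ log|x − t| dμ_n(t) → ∫ log|x − t| dμ(t) < ∞ as n → ∞, then μ_n converges weakly to μ. -/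
open MeasureTheory Filter Set

noncomputable def Wfun (a : ℝ) (k : ℕ) (x : ℝ) : ℝ → ℝ := fun t => ((max t a - x)⁻¹) ^ k
noncomputable def Lfun (a x : ℝ) : ℝ → ℝ := fun t => Real.log (max t a - x)

lemma maxsub_pos {a x : ℝ} (hx : x < a) (t : ℝ) : 0 < max t a - x := by
  have := le_max_right t a; linarith

lemma maxsub_ge {a x : ℝ} (t : ℝ) : a - x ≤ max t a - x := by
  have := le_max_right t a; linarith

lemma Wfun_cont {a x : ℝ} (hx : x < a) (k : ℕ) : Continuous (Wfun a k x) := by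
  refine ((Continuous.sub ?_ continuous_const).inv₀ ?_).pow k
  · exact continuous_id.max continuous_const
  · intro t; exact ne_of_gt (maxsub_pos hx t)

lemma Lfun_cont {a x : ℝ} (hx : x < a) : Continuous (Lfun a x) := by
  refine Continuous.log (Continuous.sub ?_ continuous_const) ?_
  · exact continuous_id.max continuous_const
  · intro t; exact ne_of_gt (maxsub_pos hx t)

lemma integrable_bdd {ρ : Measure ℝ} [IsFiniteMeasure ρ] {f : ℝ → ℝ} (hc : Continuous f)
    {C : ℝ} (hb : ∀ t, |f t| ≤ C) : Integrable f ρ := by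
  refine (integrable_const C).mono' hc.aestronglyMeasurable (Eventually.of_forall fun t => ?_)
  simpa [Real.norm_eq_abs] using hb t

lemma Wfun_bdd {a x : ℝ} (hx : x < a) (k : ℕ) (t : ℝ) : |Wfun a k x t| ≤ ((a - x)⁻¹) ^ k := by
  have h1 := maxsub_pos hx t
  have h2 := maxsub_ge (a := a) (x := x) t
  have hax : 0 < a - x := by linarith
  have : (max t a - x)⁻¹ ≤ (a - x)⁻¹ := by
    exact inv_anti₀ hax h2
  have hnn : 0 ≤ (max t a - x)⁻¹ := le_of_lt (by positivity)
  rw [Wfun, abs_of_nonneg (pow_nonneg hnn k)]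
  exact pow_le_pow_left₀ hnn this k

lemma Wfun_integrable {a x : ℝ} (hx : x < a) (k : ℕ) (ρ : Measure ℝ) [IsFiniteMeasure ρ] :
    Integrable (Wfun a k x) ρ :=
  integrable_bdd (Wfun_cont hx k) (Wfun_bdd hx k)

lemma ae_ge {a : ℝ} {ρ : Measure ℝ} (h : ρ (Set.Iio a) = 0) : ∀ᵐ t ∂ρ, a ≤ t := by
  rw [ae_iff]
  convert h using 2
  ext t; simp [not_le]

lemma hasDerivAt_pow_inv (c y : ℝ) (h : 0 < c - y) (k : ℕ) :
    HasDerivAt (fun y => ((c - y)⁻¹) ^ (k+1)) (((k:ℝ)+1) * ((c - y)⁻¹) ^ (k+2)) y := by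
  have h1 : HasDerivAt (fun y : ℝ => c - y) (-1) y := (hasDerivAt_id y).const_sub c
  have h2 : HasDerivAt (fun y : ℝ => (c - y)⁻¹) (-(-1) / (c - y) ^ 2) y := h1.inv (ne_of_gt h)
  have h3 := h2.fun_pow (k+1)
  refine h3.congr_deriv ?_
  have e : (-(-1) / (c - y) ^ 2) = ((c - y)⁻¹) ^ 2 := by
    rw [neg_neg, inv_pow]; exact one_div _
  rw [e]
  have e2 : k + 1 - 1 = k := rfl
  rw [e2, pow_add]
  push_cast
  ring

lemma hasDerivAt_log_sub (c y : ℝ) (h : 0 < c - y) :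
    HasDerivAt (fun y => Real.log (c - y)) (-((c - y)⁻¹)) y := by
  have h1 : HasDerivAt (fun y : ℝ => c - y) (-1) y := (hasDerivAt_id y).const_sub c
  have h2 := h1.log (ne_of_gt h)
  convert h2 using 1
  rw [neg_div, one_div]

lemma ball_lt {a x y : ℝ} (hx : x < a) (hy : y ∈ Metric.ball x ((a - x)/2)) :
    (a - x)/2 < a - y := by
  have := abs_lt.1 (show |y - x| < (a-x)/2 from by simpa [Real.dist_eq] using hy)
  linarith [this.2]

lemma hasDerivAt_int_W (a : ℝ) (ρ : Measure ℝ) [IsProbabilityMeasure ρ] (k : ℕ) {x : ℝ}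
    (hx : x < a) :
    HasDerivAt (fun y => ∫ t, Wfun a (k+1) y t ∂ρ) (((k:ℝ)+1) * ∫ t, Wfun a (k+2) x t ∂ρ) x := by
  have hε : 0 < (a - x)/2 := by linarith
  have key := hasDerivAt_integral_of_dominated_loc_of_deriv_le (μ := ρ)
    (F := fun y t => Wfun a (k+1) y t) (F' := fun y t => ((k:ℝ)+1) * Wfun a (k+2) y t)
    (x₀ := x) (bound := fun _ => ((k:ℝ)+1) * ((((a-x)/2)⁻¹) ^ (k+2))) (Metric.ball_mem_nhds x hε)
    ?_ (Wfun_integrable hx (k+1) ρ) ?_ ?_ (integrable_const _) ?_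
  · rw [← integral_const_mul]
    exact key.2
  · filter_upwards [Metric.ball_mem_nhds x hε] with y hy
    have hya : y < a := by have := ball_lt hx hy; linarith
    exact (Wfun_cont hya (k+1)).aestronglyMeasurable
  · exact (continuous_const.mul (Wfun_cont hx (k+2))).aestronglyMeasurable
  · refine Eventually.of_forall fun t => fun y hy => ?_
    have h1 : (a - x)/2 < max t a - y := lt_of_lt_of_le (ball_lt hx hy) (maxsub_ge t)
    have h2 : (0:ℝ) < max t a - y := lt_trans hε h1
    have h3 : (max t a - y)⁻¹ ≤ ((a-x)/2)⁻¹ := inv_anti₀ hε h1.le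
    have h4 : (0:ℝ) ≤ (max t a - y)⁻¹ := le_of_lt (by positivity)
    rw [Real.norm_eq_abs, abs_of_nonneg (by
      exact mul_nonneg (by positivity) (pow_nonneg h4 _))]
    exact mul_le_mul_of_nonneg_left (pow_le_pow_left₀ h4 h3 _) (by positivity)
  · refine Eventually.of_forall fun t => fun y hy => ?_
    have h1 : (a - x)/2 < max t a - y := lt_of_lt_of_le (ball_lt hx hy) (maxsub_ge t)
    have h2 : (0:ℝ) < max t a - y := lt_trans hε h1
    exact hasDerivAt_pow_inv (max t a) y h2 k

lemma hasDerivAt_int_negL (a : ℝ) (ρ : Measure ℝ) [IsProbabilityMeasure ρ] {x : ℝ}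
    (hx : x < a) (hL : Integrable (Lfun a x) ρ) :
    HasDerivAt (fun y => -∫ t, Lfun a y t ∂ρ) (∫ t, Wfun a 1 x t ∂ρ) x := by
  have hε : 0 < (a - x)/2 := by linarith
  have key := hasDerivAt_integral_of_dominated_loc_of_deriv_le (μ := ρ)
    (F := fun y t => Lfun a y t) (F' := fun y t => -(Wfun a 1 y t))
    (x₀ := x) (bound := fun _ => ((a-x)/2)⁻¹) (Metric.ball_mem_nhds x hε)
    ?_ hL ?_ ?_ (integrable_const _) ?_
  · have h := key.2.fun_neg
    rw [← integral_neg] at h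
    simpa using h
  · filter_upwards [Metric.ball_mem_nhds x hε] with y hy
    have hya : y < a := by have := ball_lt hx hy; linarith
    exact (Lfun_cont hya).aestronglyMeasurable
  · exact ((Wfun_cont hx 1).neg).aestronglyMeasurable
  · refine Eventually.of_forall fun t => fun y hy => ?_
    have h1 : (a - x)/2 < max t a - y := lt_of_lt_of_le (ball_lt hx hy) (maxsub_ge t)
    have h2 : (0:ℝ) < max t a - y := lt_trans hε h1
    have h4 : (0:ℝ) ≤ (max t a - y)⁻¹ := le_of_lt (by positivity)
    rw [Real.norm_eq_abs, abs_neg, abs_of_nonneg (by simpa [Wfun] using h4)]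
    simpa [Wfun] using inv_anti₀ hε h1.le
  · refine Eventually.of_forall fun t => fun y hy => ?_
    have h1 : (a - x)/2 < max t a - y := lt_of_lt_of_le (ball_lt hx hy) (maxsub_ge t)
    have h2 : (0:ℝ) < max t a - y := lt_trans hε h1
    have := hasDerivAt_log_sub (max t a) y h2
    simpa [Lfun, Wfun] using this

lemma deriv_tendsto {a : ℝ} {f g : ℕ → ℝ → ℝ} {F G : ℝ → ℝ}
    (hder : ∀ᶠ n in atTop, ∀ y ∈ Set.Iio a, HasDerivAt (f n) (g n y) y)
    (hmono : ∀ᶠ n in atTop, MonotoneOn (g n) (Set.Iio a))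
    (hcv : ∀ y ∈ Set.Iio a, Tendsto (fun n => f n y) atTop (nhds (F y)))
    (hF : ∀ y ∈ Set.Iio a, HasDerivAt F (G y) y)
    (hG : ∀ y ∈ Set.Iio a, ContinuousAt G y)
    {x : ℝ} (hx : x < a) :
    Tendsto (fun n => g n x) atTop (nhds (G x)) := by
  refine Metric.tendsto_nhds.2 fun ε hε => ?_
  obtain ⟨δ, hδ, hδG⟩ := Metric.continuousAt_iff.1 (hG x hx) (ε/4) (by linarith)
  set h := min (δ/2) ((a - x)/2) with hh
  have hhpos : 0 < h := lt_min (by linarith) (by linarith)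
  have hxa : x + h < a := by
    have : h ≤ (a - x)/2 := min_le_right _ _
    linarith
  have hmem : ∀ y ∈ Icc (x - h) (x + h), y ∈ Set.Iio a := fun y hy => lt_of_le_of_lt hy.2 hxa
  have hδh : ∀ c ∈ Icc (x - h) (x + h), |G c - G x| < ε/4 := by
    intro c hc
    have : dist c x < δ := by
      rw [Real.dist_eq]
      have h1 : h ≤ δ/2 := min_le_left _ _
      have h2 : |c - x| ≤ h := abs_le.2 ⟨by linarith [hc.1], by linarith [hc.2]⟩
      exact lt_of_le_of_lt h2 (by linarith)
    simpa [Real.dist_eq] using hδG this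
  -- MVT for F on both sides
  have hFderiv : ∀ y ∈ Icc (x - h) (x + h), HasDerivAt F (G y) y := fun y hy => hF y (hmem y hy)
  have hFcont : ContinuousOn F (Icc (x - h) (x + h)) :=
    fun y hy => (hFderiv y hy).continuousAt.continuousWithinAt
  obtain ⟨c₁, hc₁, hc₁eq⟩ := exists_hasDerivAt_eq_slope F G (show x < x + h by linarith)
    (hFcont.mono (Icc_subset_Icc (by linarith) le_rfl))
    (fun y hy => hFderiv y ⟨by linarith [hy.1], hy.2.le⟩)
  obtain ⟨c₂, hc₂, hc₂eq⟩ := exists_hasDerivAt_eq_slope F G (show x - h < x by linarith)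
    (hFcont.mono (Icc_subset_Icc le_rfl (by linarith)))
    (fun y hy => hFderiv y ⟨hy.1.le, by linarith [hy.2]⟩)
  have hs₁ : (F (x + h) - F x)/h < G x + ε/4 := by
    have := hδh c₁ ⟨by linarith [hc₁.1], hc₁.2.le⟩
    have h2 : (F (x + h) - F x)/(x + h - x) = G c₁ := hc₁eq.symm
    rw [show x + h - x = h by ring] at h2
    rw [h2]
    linarith [abs_lt.1 this |>.2]
  have hs₂ : G x - ε/4 < (F x - F (x - h))/h := by
    have := hδh c₂ ⟨hc₂.1.le, by linarith [hc₂.2]⟩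
    have h2 : (F x - F (x - h))/(x - (x - h)) = G c₂ := hc₂eq.symm
    rw [show x - (x - h) = h by ring] at h2
    rw [h2]
    linarith [abs_lt.1 this |>.1]
  -- convergence of slopes
  have ht₁ : Tendsto (fun n => (f n (x + h) - f n x)/h) atTop
      (nhds ((F (x + h) - F x)/h)) :=
    ((hcv _ hxa).sub (hcv _ hx)).div_const h
  have ht₂ : Tendsto (fun n => (f n x - f n (x - h))/h) atTop
      (nhds ((F x - F (x - h))/h)) :=
    ((hcv _ hx).sub (hcv _ (show x - h < a by linarith))).div_const h
  have ev₁ : ∀ᶠ n in atTop, (f n (x + h) - f n x)/h < G x + ε/4 :=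
    ht₁.eventually_lt_const hs₁
  have ev₂ : ∀ᶠ n in atTop, G x - ε/4 < (f n x - f n (x - h))/h :=
    ht₂.eventually_const_lt hs₂
  filter_upwards [hder, hmono, ev₁, ev₂] with n hd hm h1 h2
  -- MVT for f n
  have hdn : ∀ y ∈ Icc (x - h) (x + h), HasDerivAt (f n) (g n y) y := fun y hy => hd y (hmem y hy)
  have hcn : ContinuousOn (f n) (Icc (x - h) (x + h)) :=
    fun y hy => (hdn y hy).continuousAt.continuousWithinAt
  obtain ⟨d₁, hd₁, hd₁eq⟩ := exists_hasDerivAt_eq_slope (f n) (g n) (show x < x + h by linarith)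
    (hcn.mono (Icc_subset_Icc (by linarith) le_rfl))
    (fun y hy => hdn y ⟨by linarith [hy.1], hy.2.le⟩)
  obtain ⟨d₂, hd₂, hd₂eq⟩ := exists_hasDerivAt_eq_slope (f n) (g n) (show x - h < x by linarith)
    (hcn.mono (Icc_subset_Icc le_rfl (by linarith)))
    (fun y hy => hdn y ⟨hy.1.le, by linarith [hy.2]⟩)
  have hup : g n x < G x + ε/4 := by
    have hle : g n x ≤ g n d₁ := hm hx (hmem d₁ ⟨by linarith [hd₁.1], hd₁.2.le⟩) hd₁.1.le
    have : g n d₁ = (f n (x + h) - f n x)/h := by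
      rw [hd₁eq, show x + h - x = h by ring]
    linarith [this ▸ hle]
  have hlo : G x - ε/4 < g n x := by
    have hle : g n d₂ ≤ g n x := hm (hmem d₂ ⟨hd₂.1.le, by linarith [hd₂.2]⟩) hx hd₂.2.le
    have : g n d₂ = (f n x - f n (x - h))/h := by
      rw [hd₂eq, show x - (x - h) = h by ring]
    linarith [this ▸ hle]
  rw [Real.dist_eq, abs_lt]
  constructor <;> linarith

lemma log_sub_log_le {A B c : ℝ} (hc : 0 < c) (hA : c ≤ A) (hB : c ≤ B) :
    Real.log A - Real.log B ≤ |A - B| / c := by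
  have hA0 : 0 < A := lt_of_lt_of_le hc hA
  have hB0 : 0 < B := lt_of_lt_of_le hc hB
  have h1 : Real.log A - Real.log B = Real.log (A/B) :=
    (Real.log_div (ne_of_gt hA0) (ne_of_gt hB0)).symm
  have h2 : Real.log (A/B) ≤ A/B - 1 := Real.log_le_sub_one_of_pos (div_pos hA0 hB0)
  have h3 : A/B - 1 = (A - B)/B := by field_simp
  have h4 : (A - B)/B ≤ |A - B| / c := div_le_div₀ (abs_nonneg _) (le_abs_self _) hc hB
  linarith [h1 ▸ (h2.trans_eq h3)]

lemma abs_log_sub_log_le {A B c : ℝ} (hc : 0 < c) (hA : c ≤ A) (hB : c ≤ B) :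
    |Real.log A - Real.log B| ≤ |A - B| / c := by
  rw [abs_sub_le_iff]
  refine ⟨log_sub_log_le hc hA hB, ?_⟩
  rw [abs_sub_comm]
  exact log_sub_log_le hc hB hA

lemma weierstrass_eps {F : ℝ → ℝ} (hF : Continuous F) {ε : ℝ} (hε : 0 < ε) :
    ∃ p : Polynomial ℝ, ∀ s ∈ Set.Icc (0:ℝ) 1, |F s - p.eval s| ≤ ε := by
  set f : C(Set.Icc (0:ℝ) 1, ℝ) := ⟨fun s => F s, hF.comp continuous_subtype_val⟩ with hf
  have hmem : f ∈ closure ((polynomialFunctions (Set.Icc (0:ℝ) 1)) : Set C(Set.Icc (0:ℝ) 1, ℝ)) := by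
    rw [← Subalgebra.topologicalClosure_coe, polynomialFunctions_closure_eq_top]
    trivial
  obtain ⟨g, hg, hdist⟩ := Metric.mem_closure_iff.1 hmem ε hε
  rw [polynomialFunctions_coe] at hg
  obtain ⟨p, rfl⟩ := hg
  refine ⟨p, fun s hs => ?_⟩
  have := ContinuousMap.dist_apply_le_dist (f := f) (g := Polynomial.toContinuousMapOnAlgHom _ p) ⟨s, hs⟩
  rw [Real.dist_eq] at this
  have h2 : (Polynomial.toContinuousMapOnAlgHom (Set.Icc (0:ℝ) 1) p) ⟨s, hs⟩ = p.eval s := rfl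
  have h3 : f ⟨s, hs⟩ = F s := rfl
  rw [h2, h3] at this
  exact this.trans (le_of_lt hdist)

lemma Lfun_lower {a x : ℝ} (hx : x < a) (t : ℝ) : Real.log (a - x) ≤ Lfun a x t := by
  have := maxsub_ge (a := a) (x := x) t
  exact Real.log_le_log (by linarith) this

lemma Lfun_int_of {a x : ℝ} (hx : x < a) {ρ : Measure ℝ} [IsProbabilityMeasure ρ]
    (h2 : Integrable (Lfun a (a-2)) ρ) : Integrable (Lfun a x) ρ := by
  have hx2 : a - 2 < a := by linarith
  have hdc : Continuous (fun t => Lfun a x t - Lfun a (a-2) t) :=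
    (Lfun_cont hx).sub (Lfun_cont hx2)
  have hc : (0:ℝ) < min (a - x) 2 := lt_min (by linarith) (by norm_num)
  have hbd : ∀ t, |Lfun a x t - Lfun a (a-2) t| ≤ |(max t a - x) - (max t a - (a-2))| / min (a - x) 2 := by
    intro t
    refine abs_log_sub_log_le hc ?_ ?_
    · exact le_trans (min_le_left _ _) (maxsub_ge t)
    · exact le_trans (min_le_right _ _) (by have := maxsub_ge (a := a) (x := a-2) t; linarith)
  have hbd' : ∀ t, |Lfun a x t - Lfun a (a-2) t| ≤ |a - 2 - x| / min (a - x) 2 := by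
    intro t
    have := hbd t
    have e : (max t a - x) - (max t a - (a-2)) = a - 2 - x := by ring
    rwa [e] at this
  have h3 := h2.add (integrable_bdd hdc hbd')
  refine h3.congr (Eventually.of_forall fun t => ?_)
  simp

lemma markov_L {a M : ℝ} (haM : a ≤ M) {ρ : Measure ℝ} [IsProbabilityMeasure ρ]
    (hL : Integrable (Lfun a (a-2)) ρ) :
    (ρ (Set.Ioi M)).toReal * Real.log (M - a + 2) ≤ ∫ t, Lfun a (a-2) t ∂ρ := by
  have hM2 : (0:ℝ) < M - a + 2 := by linarith
  have key : ∀ t, Set.indicator (Set.Ioi M) (fun _ => Real.log (M - a + 2)) t ≤ Lfun a (a-2) t := by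
    intro t
    by_cases ht : t ∈ Set.Ioi M
    · rw [Set.indicator_of_mem ht]
      have h1 : M - a + 2 ≤ max t a - (a-2) := by
        have : t ≤ max t a := le_max_left _ _
        have : M < t := ht
        linarith [le_max_left t a]
      exact Real.log_le_log hM2 h1
    · rw [Set.indicator_of_notMem ht]
      refine Real.log_nonneg ?_
      have := maxsub_ge (a := a) (x := a - 2) t
      linarith
  have hind : Integrable (Set.indicator (Set.Ioi M) (fun _ => Real.log (M - a + 2))) ρ :=
    (integrable_const _).indicator measurableSet_Ioi
  have h1 := integral_mono hind hL key
  rwa [integral_indicator_const _ measurableSet_Ioi, smul_eq_mul, measureReal_def] at h1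

lemma mono_int_W {a : ℝ} (k : ℕ) (ρ : Measure ℝ) [IsProbabilityMeasure ρ] :
    MonotoneOn (fun x => ∫ t, Wfun a k x t ∂ρ) (Set.Iio a) := by
  intro x hx y hy hxy
  refine integral_mono (Wfun_integrable hx k ρ) (Wfun_integrable hy k ρ) fun t => ?_
  have h1 : 0 < max t a - y := maxsub_pos hy t
  have h2 : (max t a - y) ≤ (max t a - x) := by linarith
  have h3 : (max t a - x)⁻¹ ≤ (max t a - y)⁻¹ := inv_anti₀ h1 h2
  have h4 : 0 < max t a - x := maxsub_pos hx t
  exact pow_le_pow_left₀ (le_of_lt (by positivity)) h3 k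

set_option maxHeartbeats 1000000

theorem log_potential_convergence_implies_weak (a : ℝ)
    (μn : ℕ → ProbabilityMeasure ℝ) (μ : ProbabilityMeasure ℝ)
    (hsupp : ∀ n, (μn n : Measure ℝ) (Set.Iio a) = 0)
    (hsuppμ : (μ : Measure ℝ) (Set.Iio a) = 0)
    (hint : ∀ x < a, Integrable (fun t => Real.log |x - t|) (μ : Measure ℝ))
    (hconv : ∀ x < a,
      Filter.Tendsto (fun n => ∫ t, Real.log |x - t| ∂(μn n : Measure ℝ)) Filter.atTop
        (nhds (∫ t, Real.log |x - t| ∂(μ : Measure ℝ)))) :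
    Filter.Tendsto μn Filter.atTop (nhds μ) := by
  have hx2 : a - 2 < a := by linarith
  have hx1 : a - 1 < a := by linarith
  have aeμ : ∀ᵐ t ∂(μ : Measure ℝ), a ≤ t := ae_ge hsuppμ
  have aeμn : ∀ n, ∀ᵐ t ∂(μn n : Measure ℝ), a ≤ t := fun n => ae_ge (hsupp n)
  have hcongr : ∀ x : ℝ, x < a → ∀ ρ : Measure ℝ, (∀ᵐ t ∂ρ, a ≤ t) →
      (fun t => Real.log |x - t|) =ᵐ[ρ] Lfun a x := by
    intro x hxa ρ hρ
    filter_upwards [hρ] with t ht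
    have h1 : max t a = t := max_eq_left ht
    have h2 : |x - t| = t - x := by
      rw [abs_sub_comm]; exact abs_of_nonneg (by linarith)
    show Real.log |x - t| = Real.log (max t a - x)
    rw [h1, h2]
  have hintL : ∀ x : ℝ, x < a → Integrable (Lfun a x) (μ : Measure ℝ) := fun x hxa =>
    (hint x hxa).congr (hcongr x hxa _ aeμ)
  have hconvL : ∀ x : ℝ, x < a → Tendsto (fun n => ∫ t, Lfun a x t ∂(μn n : Measure ℝ)) atTop
      (nhds (∫ t, Lfun a x t ∂(μ : Measure ℝ))) := by
    intro x hxa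
    have e1 : (fun n => ∫ t, Lfun a x t ∂(μn n : Measure ℝ))
        = fun n => ∫ t, Real.log |x - t| ∂(μn n : Measure ℝ) :=
      funext fun n => (integral_congr_ae (hcongr x hxa _ (aeμn n))).symm
    have e2 : ∫ t, Lfun a x t ∂(μ : Measure ℝ) = ∫ t, Real.log |x - t| ∂(μ : Measure ℝ) :=
      (integral_congr_ae (hcongr x hxa _ aeμ)).symm
    rw [e1, e2]
    exact hconv x hxa
  have hlog2 : (0:ℝ) < Real.log 2 := Real.log_pos (by norm_num)
  have hLlow : ∀ t, Real.log 2 ≤ Lfun a (a-2) t := by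
    intro t
    have h := Lfun_lower hx2 t
    have e : a - (a - 2) = 2 := by ring
    rwa [e] at h
  have hμpos : Real.log 2 ≤ ∫ t, Lfun a (a-2) t ∂(μ : Measure ℝ) := by
    have h := integral_mono (μ := (μ : Measure ℝ)) (integrable_const (Real.log 2))
      (hintL _ hx2) hLlow
    simpa using h
  set Cμ := ∫ t, Lfun a (a-2) t ∂(μ : Measure ℝ) with hCμdef
  have hCμpos : 0 < Cμ := lt_of_lt_of_le hlog2 hμpos
  have hev_int : ∀ᶠ n in atTop, Integrable (Lfun a (a-2)) (μn n : Measure ℝ) := by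
    filter_upwards [(hconvL _ hx2).eventually_const_lt (show (0:ℝ) < Cμ from hCμpos)] with n hn
    by_contra hni
    rw [integral_undef hni] at hn
    exact lt_irrefl 0 hn
  have hev_bd : ∀ᶠ n in atTop, ∫ t, Lfun a (a-2) t ∂(μn n : Measure ℝ) ≤ Cμ + 1 :=
    (hconvL _ hx2).eventually_le_const (by linarith)
  -- the main induction: convergence of all inverse-moment integrals
  have main : ∀ k : ℕ, ∀ x : ℝ, x < a →
      Tendsto (fun n => ∫ t, Wfun a (k+1) x t ∂(μn n : Measure ℝ)) atTop
        (nhds (∫ t, Wfun a (k+1) x t ∂(μ : Measure ℝ))) := by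
    intro k
    induction k with
    | zero =>
      intro x hxa
      refine deriv_tendsto (a := a)
        (f := fun n y => -∫ t, Lfun a y t ∂(μn n : Measure ℝ))
        (g := fun n y => ∫ t, Wfun a 1 y t ∂(μn n : Measure ℝ))
        (F := fun y => -∫ t, Lfun a y t ∂(μ : Measure ℝ))
        (G := fun y => ∫ t, Wfun a 1 y t ∂(μ : Measure ℝ)) ?_ ?_ ?_ ?_ ?_ hxa
      · filter_upwards [hev_int] with n hn y hy
        exact hasDerivAt_int_negL a _ hy (Lfun_int_of hy hn)
      · exact Eventually.of_forall fun n => mono_int_W 1 _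
      · intro y hy; exact (hconvL y hy).neg
      · intro y hy; exact hasDerivAt_int_negL a _ hy (hintL y hy)
      · intro y hy; exact (hasDerivAt_int_W a (μ : Measure ℝ) 0 hy).continuousAt
    | succ k ih =>
      intro x hxa
      have hk : ((k:ℝ)+1) ≠ 0 := by positivity
      have step := deriv_tendsto (a := a)
        (f := fun n y => ∫ t, Wfun a (k+1) y t ∂(μn n : Measure ℝ))
        (g := fun n y => ((k:ℝ)+1) * ∫ t, Wfun a (k+2) y t ∂(μn n : Measure ℝ))
        (F := fun y => ∫ t, Wfun a (k+1) y t ∂(μ : Measure ℝ))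
        (G := fun y => ((k:ℝ)+1) * ∫ t, Wfun a (k+2) y t ∂(μ : Measure ℝ))
        (Eventually.of_forall fun n y hy => hasDerivAt_int_W a _ k hy)
        (Eventually.of_forall fun n => fun u hu v hv huv =>
          mul_le_mul_of_nonneg_left (mono_int_W (k+2) _ hu hv huv) (by positivity))
        ih
        (fun y hy => hasDerivAt_int_W a _ k hy)
        (fun y hy => ((hasDerivAt_int_W a (μ : Measure ℝ) (k+1) hy).continuousAt).const_mul _)
        hxa
      have h2 := step.const_mul (((k:ℝ)+1)⁻¹)
      simpa [← mul_assoc, inv_mul_cancel₀ hk] using h2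
  -- weak convergence via bounded continuous functions
  rw [ProbabilityMeasure.tendsto_iff_forall_integral_tendsto]
  intro f
  refine Metric.tendsto_nhds.2 fun ε hε => ?_
  set B := ‖f‖ + 1 with hBdef
  have hBpos : (0:ℝ) < B := by positivity
  have hfB : ∀ t : ℝ, |f t| ≤ B := fun t => by
    have := f.norm_coe_le_norm t
    rw [Real.norm_eq_abs] at this
    linarith
  set ε' := ε / (4*B + 4) with hε'def
  have hε'pos : 0 < ε' := by positivity
  set M := max a (a - 2 + Real.exp ((Cμ + 1)/ε')) with hMdef
  have haM : a ≤ M := le_max_left _ _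
  have hMlog : (Cμ + 1)/ε' ≤ Real.log (M - a + 2) := by
    have h1 : a - 2 + Real.exp ((Cμ + 1)/ε') ≤ M := le_max_right _ _
    have h2 : Real.exp ((Cμ+1)/ε') ≤ M - a + 2 := by linarith
    calc (Cμ+1)/ε' = Real.log (Real.exp ((Cμ+1)/ε')) := (Real.log_exp _).symm
    _ ≤ Real.log (M - a + 2) := Real.log_le_log (Real.exp_pos _) h2
  have hlogM : 0 < Real.log (M - a + 2) :=
    lt_of_lt_of_le (by positivity) hMlog
  have hdiv : (Cμ + 1) / Real.log (M - a + 2) ≤ ε' := by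
    rw [div_le_iff₀ hlogM]
    have := (div_le_iff₀ hε'pos).1 hMlog
    linarith [mul_comm ε' (Real.log (M - a + 2)) ▸ this]
  -- tail bounds
  have htailμ : ((μ : Measure ℝ) (Set.Ioi M)).toReal ≤ ε' := by
    have h1 := markov_L haM (hintL _ hx2)
    have h2 : ((μ : Measure ℝ) (Set.Ioi M)).toReal ≤ (Cμ+1) / Real.log (M-a+2) := by
      rw [le_div_iff₀ hlogM]; linarith
    exact h2.trans hdiv
  have htailn : ∀ᶠ n in atTop, (((μn n) : Measure ℝ) (Set.Ioi M)).toReal ≤ ε' := by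
    filter_upwards [hev_int, hev_bd] with n h1 h2
    have h3 := markov_L haM h1
    have h4 : (((μn n) : Measure ℝ) (Set.Ioi M)).toReal ≤ (Cμ+1) / Real.log (M-a+2) := by
      rw [le_div_iff₀ hlogM]; linarith
    exact h4.trans hdiv
  -- the compactified test function
  set c : ℝ := (M - a + 1)⁻¹ with hcdef
  have hMa1 : (0:ℝ) < M - a + 1 := by linarith
  have hcpos : 0 < c := by rw [hcdef]; positivity
  set Fc : ℝ → ℝ := fun s => f (a - 1 + (max s c)⁻¹) with hFcdef
  have hFcont : Continuous Fc := by
    refine f.continuous.comp (continuous_const.add ((continuous_id.max continuous_const).inv₀ ?_))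
    intro s
    exact ne_of_gt (lt_of_lt_of_le hcpos (le_max_right _ _))
  have hFcB : ∀ s, |Fc s| ≤ B := fun s => hfB _
  obtain ⟨p, hp⟩ := weierstrass_eps hFcont hε'pos
  set gfun : ℝ → ℝ := fun t => (max t a - (a-1))⁻¹ with hgdef
  have hgcont : Continuous gfun := by
    refine (Continuous.sub (continuous_id.max continuous_const) continuous_const).inv₀ ?_
    intro t; exact ne_of_gt (maxsub_pos hx1 t)
  have hgmem : ∀ t, gfun t ∈ Set.Icc (0:ℝ) 1 := by
    intro t
    have h1 : (1:ℝ) ≤ max t a - (a-1) := by have := le_max_right t a; linarith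
    have h0 : (0:ℝ) < max t a - (a-1) := by linarith
    exact ⟨le_of_lt (by positivity), inv_le_one_of_one_le₀ h1⟩
  have hFg_eq : ∀ t, a ≤ t → t ≤ M → Fc (gfun t) = f t := by
    intro t h1 h2
    have hmax : max t a = t := max_eq_left h1
    have hpos : (0:ℝ) < t - a + 1 := by linarith
    have e1 : gfun t = (t - a + 1)⁻¹ := by
      show (max t a - (a-1))⁻¹ = (t - a + 1)⁻¹
      rw [hmax]; ring_nf
    have e2 : c ≤ gfun t := by
      rw [e1, hcdef]
      exact inv_anti₀ hpos (by linarith)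
    have e3 : max (gfun t) c = gfun t := max_eq_left e2
    show f (a - 1 + (max (gfun t) c)⁻¹) = f t
    rw [e3, e1, inv_inv]
    congr 1; ring
  have hdiff_bd : ∀ t, a ≤ t →
      |f t - Fc (gfun t)| ≤ Set.indicator (Set.Ioi M) (fun _ => 2*B) t := by
    intro t ht
    by_cases hM' : t ≤ M
    · have : t ∉ Set.Ioi M := by simp [hM']
      rw [Set.indicator_of_notMem this, hFg_eq t ht hM', sub_self, abs_zero]
    · push_neg at hM'
      rw [Set.indicator_of_mem (Set.mem_Ioi.2 hM')]
      calc |f t - Fc (gfun t)| ≤ |f t| + |Fc (gfun t)| := abs_sub _ _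
      _ ≤ B + B := add_le_add (hfB t) (hFcB _)
      _ = 2*B := by ring
  -- integrability of all test integrands
  have hf_int : ∀ ρ : Measure ℝ, IsProbabilityMeasure ρ → Integrable (fun t => f t) ρ :=
    fun ρ _ => integrable_bdd f.continuous hfB
  have hFg_int : ∀ ρ : Measure ℝ, IsProbabilityMeasure ρ → Integrable (fun t => Fc (gfun t)) ρ :=
    fun ρ _ => integrable_bdd (hFcont.comp hgcont) (fun t => hFcB _)
  have hpB : ∀ t : ℝ, |p.eval (gfun t)| ≤ B + ε' := by
    intro t
    have h1 := hp _ (hgmem t)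
    have h2 := hFcB (gfun t)
    have := abs_sub_abs_le_abs_sub (p.eval (gfun t)) (Fc (gfun t))
    rw [abs_sub_comm (Fc (gfun t))] at h1
    linarith [abs_sub_comm (p.eval (gfun t)) (Fc (gfun t)) ▸ h1]
  have hpg_int : ∀ ρ : Measure ℝ, IsProbabilityMeasure ρ →
      Integrable (fun t => p.eval (gfun t)) ρ :=
    fun ρ _ => integrable_bdd (p.continuous.comp hgcont) hpB
  -- estimate 1 : cutting off the tail
  have est1 : ∀ ρ : Measure ℝ, ∀ _ : IsProbabilityMeasure ρ, (∀ᵐ t ∂ρ, a ≤ t) →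
      |∫ t, f t ∂ρ - ∫ t, Fc (gfun t) ∂ρ| ≤ 2*B*(ρ (Set.Ioi M)).toReal := by
    intro ρ hρ hae
    rw [← integral_sub (hf_int ρ hρ) (hFg_int ρ hρ)]
    have h1 : |∫ t, (f t - Fc (gfun t)) ∂ρ| ≤ ∫ t, |f t - Fc (gfun t)| ∂ρ := by
      simpa [Real.norm_eq_abs] using
        norm_integral_le_integral_norm (μ := ρ) (f := fun t => f t - Fc (gfun t))
    refine h1.trans ?_
    have h2 : ∫ t, |f t - Fc (gfun t)| ∂ρ ≤
        ∫ t, Set.indicator (Set.Ioi M) (fun _ => 2*B) t ∂ρ := by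
      refine integral_mono_ae ((hf_int ρ hρ).sub (hFg_int ρ hρ)).abs
        ((integrable_const _).indicator measurableSet_Ioi) ?_
      filter_upwards [hae] with t ht
      exact hdiff_bd t ht
    refine h2.trans ?_
    rw [integral_indicator_const _ measurableSet_Ioi, smul_eq_mul, measureReal_def]
    linarith
  -- estimate 2 : polynomial approximation
  have est2 : ∀ ρ : Measure ℝ, ∀ _ : IsProbabilityMeasure ρ,
      |∫ t, Fc (gfun t) ∂ρ - ∫ t, p.eval (gfun t) ∂ρ| ≤ ε' := by
    intro ρ hρ
    rw [← integral_sub (hFg_int ρ hρ) (hpg_int ρ hρ)]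
    have h1 : |∫ t, (Fc (gfun t) - p.eval (gfun t)) ∂ρ| ≤
        ∫ t, |Fc (gfun t) - p.eval (gfun t)| ∂ρ := by
      simpa [Real.norm_eq_abs] using
        norm_integral_le_integral_norm (μ := ρ) (f := fun t => Fc (gfun t) - p.eval (gfun t))
    refine h1.trans ?_
    have h2 : ∫ t, |Fc (gfun t) - p.eval (gfun t)| ∂ρ ≤ ∫ _t, ε' ∂ρ := by
      refine integral_mono ((hFg_int ρ hρ).sub (hpg_int ρ hρ)).abs (integrable_const _) ?_
      intro t
      exact hp _ (hgmem t)
    refine h2.trans ?_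
    simp
  -- polynomial moments converge
  have hpolyconv : Tendsto (fun n => ∫ t, p.eval (gfun t) ∂(μn n : Measure ℝ)) atTop
      (nhds (∫ t, p.eval (gfun t) ∂(μ : Measure ℝ))) := by
    have hterm_int : ∀ ρ : Measure ℝ, IsProbabilityMeasure ρ → ∀ i : ℕ,
        Integrable (fun t => p.coeff i * (gfun t)^i) ρ := by
      intro ρ hρ i
      refine integrable_bdd (continuous_const.mul (hgcont.pow i)) (C := |p.coeff i|) ?_
      intro t
      rw [abs_mul]
      have h1 := hgmem t
      have h2 : |gfun t ^ i| ≤ 1 := by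
        rw [abs_pow]
        exact pow_le_one₀ (abs_nonneg _) (by rw [abs_of_nonneg h1.1]; exact h1.2)
      nlinarith [abs_nonneg (p.coeff i)]
    have hev : ∀ ρ : Measure ℝ, IsProbabilityMeasure ρ →
        ∫ t, p.eval (gfun t) ∂ρ
          = ∑ i ∈ Finset.range (p.natDegree + 1), p.coeff i * ∫ t, (gfun t)^i ∂ρ := by
      intro ρ hρ
      have e : ∀ t, p.eval (gfun t)
          = ∑ i ∈ Finset.range (p.natDegree + 1), p.coeff i * (gfun t)^i := by
        intro t; rw [Polynomial.eval_eq_sum_range]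
      simp_rw [e]
      rw [integral_finset_sum _ (fun i _ => hterm_int ρ hρ i)]
      congr 1
      ext i
      exact integral_const_mul _ _
    have hinst : ∀ n, IsProbabilityMeasure ((μn n : Measure ℝ)) := fun n => inferInstance
    have e1 : (fun n => ∫ t, p.eval (gfun t) ∂(μn n : Measure ℝ))
        = fun n => ∑ i ∈ Finset.range (p.natDegree + 1),
            p.coeff i * ∫ t, (gfun t)^i ∂(μn n : Measure ℝ) :=
      funext fun n => hev _ (hinst n)
    rw [e1, hev _ inferInstance]
    refine tendsto_finset_sum _ fun i _ => ?_
    rcases i with _ | j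
    · simp only [pow_zero]
      exact tendsto_const_nhds.congr (by simp)
    · refine Tendsto.const_mul _ ?_
      have : ∀ ρ : Measure ℝ, ∫ t, (gfun t)^(j+1) ∂ρ = ∫ t, Wfun a (j+1) (a-1) t ∂ρ := by
        intro ρ; rfl
      rw [this]
      have e2 : (fun n => ∫ t, (gfun t)^(j+1) ∂(μn n : Measure ℝ))
          = fun n => ∫ t, Wfun a (j+1) (a-1) t ∂(μn n : Measure ℝ) := funext fun n => this _
      rw [e2]
      exact main j (a-1) hx1
  -- final combination
  have hfinal : ∀ᶠ n in atTop,
      |∫ t, p.eval (gfun t) ∂(μn n : Measure ℝ) - ∫ t, p.eval (gfun t) ∂(μ : Measure ℝ)| < ε' :=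
    by
    have := Metric.tendsto_nhds.1 hpolyconv ε' hε'pos
    filter_upwards [this] with n hn
    rwa [Real.dist_eq] at hn
  filter_upwards [htailn, hfinal] with n h1 h2
  rw [Real.dist_eq]
  have i1 := est1 (μn n : Measure ℝ) inferInstance (aeμn n)
  have i2 := est2 (μn n : Measure ℝ) inferInstance
  have i3 := est2 (μ : Measure ℝ) inferInstance
  have i4 := est1 (μ : Measure ℝ) inferInstance aeμ
  have hμtail : 2*B*(((μ : Measure ℝ)) (Set.Ioi M)).toReal ≤ 2*B*ε' :=
    mul_le_mul_of_nonneg_left htailμ (by linarith)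
  have hntail : 2*B*(((μn n : Measure ℝ)) (Set.Ioi M)).toReal ≤ 2*B*ε' :=
    mul_le_mul_of_nonneg_left h1 (by linarith)
  have hsum : (4*B+4)*ε' = ε := by
    rw [hε'def]; field_simp
  have tri : |∫ t, f t ∂(μn n : Measure ℝ) - ∫ t, f t ∂(μ : Measure ℝ)| ≤
      |∫ t, f t ∂(μn n : Measure ℝ) - ∫ t, Fc (gfun t) ∂(μn n : Measure ℝ)|
      + |∫ t, Fc (gfun t) ∂(μn n : Measure ℝ) - ∫ t, p.eval (gfun t) ∂(μn n : Measure ℝ)|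
      + |∫ t, p.eval (gfun t) ∂(μn n : Measure ℝ) - ∫ t, p.eval (gfun t) ∂(μ : Measure ℝ)|
      + |∫ t, p.eval (gfun t) ∂(μ : Measure ℝ) - ∫ t, Fc (gfun t) ∂(μ : Measure ℝ)|
      + |∫ t, Fc (gfun t) ∂(μ : Measure ℝ) - ∫ t, f t ∂(μ : Measure ℝ)| := by
    have t1 := abs_sub_le (∫ t, f t ∂(μn n : Measure ℝ))
      (∫ t, Fc (gfun t) ∂(μn n : Measure ℝ)) (∫ t, f t ∂(μ : Measure ℝ))
    have t2 := abs_sub_le (∫ t, Fc (gfun t) ∂(μn n : Measure ℝ))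
      (∫ t, p.eval (gfun t) ∂(μn n : Measure ℝ)) (∫ t, f t ∂(μ : Measure ℝ))
    have t3 := abs_sub_le (∫ t, p.eval (gfun t) ∂(μn n : Measure ℝ))
      (∫ t, p.eval (gfun t) ∂(μ : Measure ℝ)) (∫ t, f t ∂(μ : Measure ℝ))
    have t4 := abs_sub_le (∫ t, p.eval (gfun t) ∂(μ : Measure ℝ))
      (∫ t, Fc (gfun t) ∂(μ : Measure ℝ)) (∫ t, f t ∂(μ : Measure ℝ))
    linarith
  have i3' : |∫ t, p.eval (gfun t) ∂(μ : Measure ℝ) - ∫ t, Fc (gfun t) ∂(μ : Measure ℝ)| ≤ ε' := by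
    rw [abs_sub_comm]; exact i3
  have i4' : |∫ t, Fc (gfun t) ∂(μ : Measure ℝ) - ∫ t, f t ∂(μ : Measure ℝ)| ≤
      2*B*(((μ : Measure ℝ)) (Set.Ioi M)).toReal := by
    rw [abs_sub_comm]; exact i4
  calc |∫ t, f t ∂(μn n : Measure ℝ) - ∫ t, f t ∂(μ : Measure ℝ)| ≤ _ := tri
  _ < 2*B*ε' + ε' + ε' + ε' + 2*B*ε' := by
    have := lt_of_le_of_lt (le_refl (0:ℝ)) hε'pos
    linarith [i1, i2, h2, i3', i4', hμtail, hntail]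
  _ ≤ (4*B+4)*ε' := by nlinarith
  _ = ε := hsum
end
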